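/- arXiv:1112.1538 — 10 statements merged into one kernel-verified Lean document; each statement's English description precedes it below -/
import Mathlib

section
/- Let (A_j,B_j), (A_{j+1},B_{j+1}) be separations of a digraph T with A_j ⊆ A_{j+1} and B_{j+1} ⊆ B_j, and let (C,D) be a separation with A_j ⊆ C ⊆ A_{j+1} and B_{j+1} ⊆ D ⊆ B_j. Let (A_r,B_r) be a separation with A_r ⊆ A_j and B_j ⊆ B_r that is not k-close to (A_j,B_j). If (C,D) is not k-close to (A_j,B_j), then (C,D) is not k-close to (A_r,B_r). -/
/-- A separation of a finite digraph, with `Finset` sides. -/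
def IsSeparationF {V : Type*} [Fintype V] [DecidableEq V]
    (E : V → V → Prop) (A B : Finset V) : Prop :=
  A ∪ B = Finset.univ ∧ ∀ u ∈ A \ B, ∀ v ∈ B \ A, ¬ E u v

/-- Two non-crossing separations `(A,B)` and `(C,D)` with `A ⊆ C` and `D ⊆ B`,
of orders `i = |A ∩ B|` and `j = |C ∩ D|`, are `k`-close if
`|(B \ A) ∩ (C \ D)| < k·|i − j|`. -/
def KClose {V : Type*} [Fintype V] [DecidableEq V] (k : ℕ) (A B C D : Finset V) : Prop :=
  (((B \ A) ∩ (C \ D)).card : ℤ) <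
    (k : ℤ) * |((A ∩ B).card : ℤ) - ((C ∩ D).card : ℤ)|

/-- with `(A_j,B_j) ⊑ (C,D) ⊑ (A_{j+1},B_{j+1})` and `(A_r,B_r) ⊑ (A_j,B_j)`
not k-close to `(A_j,B_j)`, if `(C,D)` is not k-close to `(A_j,B_j)` then `(C,D)` is not
k-close to `(A_r,B_r)`. -/
theorem stmt_4 {V : Type*} [Fintype V] [DecidableEq V] (E : V → V → Prop) (k : ℕ)
    (Aj Bj Aj1 Bj1 C D Ar Br : Finset V)
    (hsepj : IsSeparationF E Aj Bj)
    (hsepj1 : IsSeparationF E Aj1 Bj1)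
    (hsepCD : IsSeparationF E C D)
    (hsepr : IsSeparationF E Ar Br)
    (hAj : Aj ⊆ Aj1) (hBj : Bj1 ⊆ Bj)
    (hC1 : Aj ⊆ C) (hC2 : C ⊆ Aj1)
    (hD1 : Bj1 ⊆ D) (hD2 : D ⊆ Bj)
    (hr1 : Ar ⊆ Aj) (hr2 : Bj ⊆ Br)
    (hnotr : ¬ KClose k Ar Br Aj Bj)
    (hnotC : ¬ KClose k Aj Bj C D) :
    ¬ KClose k Ar Br C D := by
  simp only [KClose, not_lt] at hnotr hnotC ⊢
  have hsub1 : (Br \ Ar) ∩ (Aj \ Bj) ⊆ (Br \ Ar) ∩ (C \ D) := by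
    intro x hx
    simp only [Finset.mem_inter, Finset.mem_sdiff] at hx ⊢
    exact ⟨hx.1, hC1 hx.2.1, fun h => hx.2.2 (hD2 h)⟩
  have hsub2 : (Bj \ Aj) ∩ (C \ D) ⊆ (Br \ Ar) ∩ (C \ D) := by
    intro x hx
    simp only [Finset.mem_inter, Finset.mem_sdiff] at hx ⊢
    exact ⟨⟨hr2 hx.1.1, fun h => hx.1.2 (hr1 h)⟩, hx.2⟩
  have hdisj : Disjoint ((Br \ Ar) ∩ (Aj \ Bj)) ((Bj \ Aj) ∩ (C \ D)) := by
    apply Finset.disjoint_left.mpr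
    intro x hx hy
    simp only [Finset.mem_inter, Finset.mem_sdiff] at hx hy
    exact hx.2.2 hy.1.1
  have hcard : ((Br \ Ar) ∩ (Aj \ Bj)).card + ((Bj \ Aj) ∩ (C \ D)).card
      ≤ ((Br \ Ar) ∩ (C \ D)).card := by
    rw [← Finset.card_union_of_disjoint hdisj]
    exact Finset.card_le_card (Finset.union_subset hsub1 hsub2)
  have htri := abs_sub_le ((Ar ∩ Br).card : ℤ) ((Aj ∩ Bj).card : ℤ) ((C ∩ D).card : ℤ)
  have hk : (0 : ℤ) ≤ (k : ℤ) := Int.ofNat_nonneg k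
  have := mul_le_mul_of_nonneg_left htri hk
  have hcard' : (((Br \ Ar) ∩ (Aj \ Bj)).card : ℤ) + (((Bj \ Aj) ∩ (C \ D)).card : ℤ)
      ≤ (((Br \ Ar) ∩ (C \ D)).card : ℤ) := by exact_mod_cast hcard
  nlinarith [hnotr, hnotC]
end

section
/- For every digraph D, the pathwidth of D is at most twice its cutwidth: pw(D) ≤ 2·ctw(D). -/
/-- A path decomposition of a digraph `(V,E)`: a sequence of bags covering all vertices,
with the interpolation property, such that every arc `(u,v)` lies in a common bag or has
`u` in a strictly later bag than `v`. -/
def IsPathDecomp {V : Type*} (E : V → V → Prop) {r : ℕ} (W : Fin r → Set V) : Prop :=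
  (∀ v, ∃ i, v ∈ W i) ∧
  (∀ i j k : Fin r, i ≤ j → j ≤ k → W i ∩ W k ⊆ W j) ∧
  (∀ u v, E u v → (∃ i, u ∈ W i ∧ v ∈ W i) ∨ ∃ i j : Fin r, j < i ∧ u ∈ W i ∧ v ∈ W j)

/-- The pathwidth of a digraph: the least `w` such that there is a path decomposition
all of whose bags have size at most `w + 1`. -/
noncomputable def pathwidth {V : Type*} [Fintype V] (E : V → V → Prop) : ℕ :=
  sInf {w : ℕ | ∃ (r : ℕ) (W : Fin r → Set V),
    IsPathDecomp E W ∧ ∀ i, (W i).ncard ≤ w + 1}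

/-- The cutwidth of a digraph: the least `c` such that some vertex ordering has, at
every cut position `ℓ`, at most `c` back arcs `(v_j, v_i)` with `i ≤ ℓ < j`. -/
noncomputable def cutwidth {V : Type*} [Fintype V] (E : V → V → Prop) : ℕ :=
  sInf {c : ℕ | ∃ e : Fin (Fintype.card V) ≃ V,
    ∀ ℓ : Fin (Fintype.card V),
      {p : Fin (Fintype.card V) × Fin (Fintype.card V) |
        p.2 ≤ ℓ ∧ ℓ < p.1 ∧ E (e p.1) (e p.2)}.ncard ≤ c}

/-- For every digraph `D`, `pw(D) ≤ 2 · ctw(D)`. -/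
theorem stmt_5 {V : Type*} [Fintype V] (E : V → V → Prop) :
    pathwidth E ≤ 2 * cutwidth E := by
  classical
  set n := Fintype.card V with hn
  set S : ℕ → Prop := fun c => ∃ e : Fin n ≃ V,
    ∀ ℓ : Fin n,
      {p : Fin n × Fin n | p.2 ≤ ℓ ∧ ℓ < p.1 ∧ E (e p.1) (e p.2)}.ncard ≤ c with hS
  have hne : S (n * n) := by
    refine ⟨(Fintype.equivFin V).symm, fun ℓ => ?_⟩
    calc {p : Fin n × Fin n | p.2 ≤ ℓ ∧ ℓ < p.1 ∧ E ((Fintype.equivFin V).symm p.1) ((Fintype.equivFin V).symm p.2)}.ncard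
        ≤ (Set.univ : Set (Fin n × Fin n)).ncard :=
          Set.ncard_le_ncard (Set.subset_univ _) Set.finite_univ
      _ = n * n := by simp [Set.ncard_univ]
  have hcw : cutwidth E = sInf {c | S c} := rfl
  have hmem : S (cutwidth E) := by
    rw [hcw]; exact Nat.sInf_mem (⟨n * n, hne⟩ : {c | S c}.Nonempty)
  obtain ⟨e, he⟩ := hmem
  set c := cutwidth E with hc
  -- the bag at cut position ℓ
  set B : Fin n → Set V := fun ℓ => {v | e.symm v = ℓ ∨
      (e.symm v ≤ ℓ ∧ ∃ a, ℓ < a ∧ E (e a) v) ∨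
      (ℓ < e.symm v ∧ ∃ b, b ≤ ℓ ∧ E v (e b))} with hB
  have hBmono : ∀ ℓ₁ ℓ ℓ₂ : Fin n, ℓ₁ ≤ ℓ → ℓ ≤ ℓ₂ → B ℓ₁ ∩ B ℓ₂ ⊆ B ℓ := by
    intro ℓ₁ ℓ ℓ₂ h1 h2 v ⟨hv1, hv2⟩
    rcases lt_trichotomy (e.symm v) ℓ with hp | hp | hp
    · -- p < ℓ : use membership at ℓ₂
      rcases hv2 with h | ⟨_, a, ha, hE⟩ | ⟨hl, _⟩
      · exact absurd (h ▸ hp) (not_lt_of_ge h2)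
      · exact Or.inr (Or.inl ⟨le_of_lt hp, a, lt_of_le_of_lt h2 ha, hE⟩)
      · exact absurd hl (not_lt_of_ge (le_of_lt (lt_of_lt_of_le hp h2)))
    · exact Or.inl hp
    · -- ℓ < p : use membership at ℓ₁
      rcases hv1 with h | ⟨hle, _⟩ | ⟨_, b, hb, hE⟩
      · exact absurd h (ne_of_gt (lt_of_le_of_lt h1 hp))
      · exact absurd hle (not_le_of_gt (lt_of_le_of_lt h1 hp))
      · exact Or.inr (Or.inr ⟨hp, b, le_trans hb h1, hE⟩)
  set W : Fin n → Set V := fun i => B i.rev with hW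
  have hdecomp : IsPathDecomp E W := by
    refine ⟨?_, ?_, ?_⟩
    · intro v
      exact ⟨(e.symm v).rev, Or.inl (by simp [Fin.rev_rev])⟩
    · intro i j k hij hjk
      intro v hv
      exact hBmono k.rev j.rev i.rev (Fin.rev_le_rev.mpr hjk) (Fin.rev_le_rev.mpr hij)
        ⟨hv.2, hv.1⟩
    · intro u v hE
      rcases lt_trichotomy (e.symm u) (e.symm v) with h | h | h
      · -- forward arc: u in strictly later bag
        refine Or.inr ⟨(e.symm u).rev, (e.symm v).rev, Fin.rev_lt_rev.mpr h, ?_, ?_⟩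
        · exact Or.inl (by simp [Fin.rev_rev])
        · exact Or.inl (by simp [Fin.rev_rev])
      · -- u = v
        exact Or.inl ⟨(e.symm u).rev, Or.inl (by simp [Fin.rev_rev]),
          Or.inl (by simp [Fin.rev_rev, e.symm.injective h])⟩
      · -- back arc: common bag at position e.symm v
        refine Or.inl ⟨(e.symm v).rev, ?_, Or.inl (by simp [Fin.rev_rev])⟩
        refine Or.inr (Or.inr ?_)
        simp only [Fin.rev_rev]
        exact ⟨h, e.symm v, le_refl _, by simpa using hE⟩
  have hcard : ∀ i, (W i).ncard ≤ 2 * c + 1 := by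
    intro i
    set ℓ := i.rev with hℓ
    set Cut : Set (Fin n × Fin n) :=
      {p : Fin n × Fin n | p.2 ≤ ℓ ∧ ℓ < p.1 ∧ E (e p.1) (e p.2)} with hCut
    have hsub : W i ⊆ {e ℓ} ∪ ((fun p : Fin n × Fin n => e p.2) '' Cut)
        ∪ ((fun p : Fin n × Fin n => e p.1) '' Cut) := by
      intro v hv
      rcases hv with h | ⟨hle, a, ha, hEa⟩ | ⟨hlt, b, hb, hEb⟩
      · exact Or.inl (Or.inl (by simp [hℓ, ← h]))
      · refine Or.inl (Or.inr ⟨(a, e.symm v), ⟨hle, ha, by simpa using hEa⟩, by simp⟩)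
      · refine Or.inr ⟨(e.symm v, b), ⟨hb, hlt, by simpa using hEb⟩, by simp⟩
    calc (W i).ncard ≤ ({e ℓ} ∪ ((fun p : Fin n × Fin n => e p.2) '' Cut)
          ∪ ((fun p : Fin n × Fin n => e p.1) '' Cut)).ncard :=
          Set.ncard_le_ncard hsub (Set.toFinite _)
      _ ≤ ({e ℓ} ∪ ((fun p : Fin n × Fin n => e p.2) '' Cut)).ncard
          + ((fun p : Fin n × Fin n => e p.1) '' Cut).ncard := Set.ncard_union_le _ _
      _ ≤ ({e ℓ} : Set V).ncard + ((fun p : Fin n × Fin n => e p.2) '' Cut).ncard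
          + ((fun p : Fin n × Fin n => e p.1) '' Cut).ncard := by
          exact Nat.add_le_add_right (Set.ncard_union_le _ _) _
      _ ≤ 1 + Cut.ncard + Cut.ncard := by
          have h1 : ((fun p : Fin n × Fin n => e p.2) '' Cut).ncard ≤ Cut.ncard :=
            Set.ncard_image_le (Set.toFinite _)
          have h2 : ((fun p : Fin n × Fin n => e p.1) '' Cut).ncard ≤ Cut.ncard :=
            Set.ncard_image_le (Set.toFinite _)
          simp only [Set.ncard_singleton]
          omega
      _ ≤ 1 + c + c := by have := he ℓ; rw [← hCut] at this; omega
      _ = 2 * c + 1 := by ring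
  have : 2 * c ∈ {w : ℕ | ∃ (r : ℕ) (W : Fin r → Set V),
      IsPathDecomp E W ∧ ∀ i, (W i).ncard ≤ w + 1} :=
    ⟨n, W, hdecomp, hcard⟩
  exact Nat.sInf_le this
end

section
/- For every semi-complete digraph T, the cliquewidth of T is at most its pathwidth plus two: cw(T) ≤ pw(T) + 2. -/
open scoped Classical

/-- `k`-expressions building a labeled digraph: introduce a labeled vertex, disjoint
union, relabel, and join (add all arcs from label `i` to label `j`). -/
inductive CWExpr (k : ℕ) (V : Type u) : Type u where
  | intro : V → Fin k → CWExpr k V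
  | union : CWExpr k V → CWExpr k V → CWExpr k V
  | relabel : Fin k → Fin k → CWExpr k V → CWExpr k V
  | join : Fin k → Fin k → CWExpr k V → CWExpr k V

namespace CWExpr

/-- Vertex set constructed by an expression. -/
def verts {k : ℕ} {V : Type u} : CWExpr k V → Set V
  | intro v _ => {v}
  | union a b => a.verts ∪ b.verts
  | relabel _ _ a => a.verts
  | join _ _ a => a.verts

/-- Labeling produced by an expression. -/
noncomputable def label {k : ℕ} {V : Type u} : CWExpr k V → V → Fin k
  | intro _ i => fun _ => i
  | union a b => fun x => if x ∈ a.verts then a.label x else b.label x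
  | relabel i j a => fun x => if a.label x = i then j else a.label x
  | join _ _ a => a.label

/-- Arc relation produced by an expression. -/
noncomputable def edges {k : ℕ} {V : Type u} : CWExpr k V → V → V → Prop
  | intro _ _ => fun _ _ => False
  | union a b => fun x y => a.edges x y ∨ b.edges x y
  | relabel _ _ a => a.edges
  | join i j a => fun x y => a.edges x y ∨
      (x ∈ a.verts ∧ y ∈ a.verts ∧ x ≠ y ∧ a.label x = i ∧ a.label y = j)

/-- Well-formedness: unions are disjoint. -/
def wf {k : ℕ} {V : Type u} : CWExpr k V → Prop
  | intro _ _ => True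
  | union a b => a.wf ∧ b.wf ∧ Disjoint a.verts b.verts
  | relabel _ _ a => a.wf
  | join _ _ a => a.wf

end CWExpr

/-- Cliquewidth of a digraph `(V, E)`: the least `k` for which some well-formed
`k`-expression constructs exactly the digraph. -/
noncomputable def cliquewidth (V : Type u) [Fintype V] (E : V → V → Prop) : ℕ :=
  sInf {k : ℕ | ∃ expr : CWExpr k V, expr.wf ∧ expr.verts = Set.univ ∧
    ∀ u v, expr.edges u v ↔ E u v}

namespace CW7

variable {V : Type u} {k : ℕ}

/-! ### Interval of bags containing a vertex -/

def Sset {r : ℕ} (W : Fin r → Set V) (x : V) : Set ℕ :=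
  {n | ∃ h : n < r, x ∈ W ⟨n, h⟩}

noncomputable def fstb {r : ℕ} (W : Fin r → Set V) (x : V) : ℕ := sInf (Sset W x)
noncomputable def lstb {r : ℕ} (W : Fin r → Set V) (x : V) : ℕ := sSup (Sset W x)

lemma Sset_bdd {r : ℕ} (W : Fin r → Set V) (x : V) : BddAbove (Sset W x) :=
  ⟨r, fun n hn => le_of_lt hn.1⟩

lemma mem_Sset_of_fin {r : ℕ} {W : Fin r → Set V} {x : V} {i : Fin r} (h : x ∈ W i) :
    (i : ℕ) ∈ Sset W x := ⟨i.isLt, by simpa using h⟩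

section decomp
variable {E : V → V → Prop} {r : ℕ} {W : Fin r → Set V} (hdec : IsPathDecomp E W)
include hdec

lemma Sset_ne (x : V) : (Sset W x).Nonempty := by
  obtain ⟨i, hi⟩ := hdec.1 x
  exact ⟨i, mem_Sset_of_fin hi⟩

lemma fstb_mem (x : V) : fstb W x ∈ Sset W x := Nat.sInf_mem (Sset_ne hdec x)
lemma lstb_mem (x : V) : lstb W x ∈ Sset W x :=
  Nat.sSup_mem (Sset_ne hdec x) (Sset_bdd W x)

lemma fstb_le_lstb (x : V) : fstb W x ≤ lstb W x :=
  Nat.sInf_le (lstb_mem hdec x)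

lemma le_lstb {x : V} {n : ℕ} (h : n ∈ Sset W x) : n ≤ lstb W x :=
  le_csSup (Sset_bdd W x) h

lemma fstb_le {x : V} {n : ℕ} (h : n ∈ Sset W x) : fstb W x ≤ n := Nat.sInf_le h

/-- Convexity: any index between `fstb` and `lstb` is a bag containing `x`. -/
lemma mem_of_between {x : V} {n : ℕ} (h1 : fstb W x ≤ n) (h2 : n ≤ lstb W x) :
    n ∈ Sset W x := by
  obtain ⟨ha, hxa⟩ := fstb_mem hdec x
  obtain ⟨hb, hxb⟩ := lstb_mem hdec x
  have hn : n < r := lt_of_le_of_lt h2 hb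
  exact ⟨hn, hdec.2.1 ⟨fstb W x, ha⟩ ⟨n, hn⟩ ⟨lstb W x, hb⟩ h1 h2 ⟨hxa, hxb⟩⟩

/-- If all bags of `u` come strictly before all bags of `v`, there is no arc `u → v`. -/
lemma no_arc {u v : V} (h : lstb W u < fstb W v) : ¬ E u v := by
  intro hE
  rcases hdec.2.2 u v hE with ⟨i, hui, hvi⟩ | ⟨i, j, hji, hui, hvj⟩
  · have h1 : (i : ℕ) ≤ lstb W u := le_lstb hdec (mem_Sset_of_fin hui)
    have h2 : fstb W v ≤ (i : ℕ) := fstb_le hdec (mem_Sset_of_fin hvi)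
    omega
  · have h1 : (i : ℕ) ≤ lstb W u := le_lstb hdec (mem_Sset_of_fin hui)
    have h2 : fstb W v ≤ (j : ℕ) := fstb_le hdec (mem_Sset_of_fin hvj)
    have h3 : (j : ℕ) < (i : ℕ) := hji
    omega

end decomp

/-! ### Every expression has a nonempty vertex set -/

lemma verts_nonempty (e : CWExpr k V) : e.verts.Nonempty := by
  induction e with
  | intro v i => exact ⟨v, rfl⟩
  | union a b iha ihb => exact iha.mono Set.subset_union_left
  | relabel i j a ih => exact ih
  | join i j a ih => exact ih

/-! ### Killing a list of labels -/

variable [NeZero k]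

noncomputable def kill (K : List (Fin k)) (e : CWExpr k V) : CWExpr k V :=
  K.foldr (fun i acc => CWExpr.relabel i 0 acc) e

@[simp] lemma kill_verts (K : List (Fin k)) (e : CWExpr k V) :
    (kill K e).verts = e.verts := by
  induction K with
  | nil => rfl
  | cons a l ih => simpa [kill, CWExpr.verts] using ih

@[simp] lemma kill_edges (K : List (Fin k)) (e : CWExpr k V) :
    (kill K e).edges = e.edges := by
  induction K with
  | nil => rfl
  | cons a l ih => simpa [kill, CWExpr.edges] using ih

@[simp] lemma kill_wf (K : List (Fin k)) (e : CWExpr k V) :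
    (kill K e).wf ↔ e.wf := by
  induction K with
  | nil => exact Iff.rfl
  | cons a l ih => simpa [kill, CWExpr.wf] using ih

lemma kill_label (K : List (Fin k)) (hK : (0 : Fin k) ∉ K) (e : CWExpr k V) (u : V) :
    (kill K e).label u = if e.label u ∈ K then 0 else e.label u := by
  induction K with
  | nil => simp [kill]
  | cons a l ih =>
    have ha : a ≠ 0 := fun h => hK (h ▸ List.mem_cons_self (a := a) (l := l))
    have hl : (0 : Fin k) ∉ l := fun h => hK (List.mem_cons_of_mem a h)
    have : (kill (a :: l) e).label u
        = if (kill l e).label u = a then 0 else (kill l e).label u := rfl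
    by_cases h1 : e.label u ∈ l
    · rw [this, ih hl, if_pos h1, if_neg (Ne.symm ha), if_pos (List.mem_cons_of_mem a h1)]
    · rw [this, ih hl, if_neg h1]
      by_cases h2 : e.label u = a
      · rw [if_pos h2, if_pos (List.mem_cons.2 (Or.inl h2))]
      · rw [if_neg h2, if_neg (fun hm => (List.mem_cons.1 hm).elim h2 h1)]

/-! ### Adding joins between singleton label classes -/

lemma join_edges_single (i j : Fin k) (e : CWExpr k V) (a b : V)
    (ha : ∀ x ∈ e.verts, (e.label x = i ↔ x = a))
    (hb : ∀ x ∈ e.verts, (e.label x = j ↔ x = b))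
    (ham : a ∈ e.verts) (hbm : b ∈ e.verts) (hab : a ≠ b) (x y : V) :
    (CWExpr.join i j e).edges x y ↔ e.edges x y ∨ (x = a ∧ y = b) := by
  show e.edges x y ∨ _ ↔ _
  constructor
  · rintro (h | ⟨hx, hy, hxy, hi, hj⟩)
    · exact Or.inl h
    · exact Or.inr ⟨(ha x hx).1 hi, (hb y hy).1 hj⟩
  · rintro (h | ⟨rfl, rfl⟩)
    · exact Or.inl h
    · exact Or.inr ⟨ham, hbm, hab, (ha _ ham).2 rfl, (hb _ hbm).2 rfl⟩

noncomputable def addJoin2 (E : V → V → Prop) (v u : V) (lv lu : Fin k)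
    (e : CWExpr k V) : CWExpr k V :=
  let e1 := if E v u then CWExpr.join lv lu e else e
  if E u v then CWExpr.join lu lv e1 else e1

noncomputable def addJoins (E : V → V → Prop) (v : V) (lv : Fin k) (lab : V → Fin k)
    (l : List V) (e : CWExpr k V) : CWExpr k V :=
  l.foldr (fun u acc => addJoin2 E v u lv (lab u) acc) e

@[simp] lemma addJoin2_verts (E : V → V → Prop) (v u : V) (lv lu : Fin k)
    (e : CWExpr k V) : (addJoin2 E v u lv lu e).verts = e.verts := by
  unfold addJoin2; split <;> split <;> rfl

@[simp] lemma addJoin2_label (E : V → V → Prop) (v u : V) (lv lu : Fin k)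
    (e : CWExpr k V) : (addJoin2 E v u lv lu e).label = e.label := by
  unfold addJoin2; split <;> split <;> rfl

@[simp] lemma addJoin2_wf (E : V → V → Prop) (v u : V) (lv lu : Fin k)
    (e : CWExpr k V) : (addJoin2 E v u lv lu e).wf ↔ e.wf := by
  unfold addJoin2; split <;> split <;> exact Iff.rfl

lemma addJoin2_edges (E : V → V → Prop) (v u : V) (lv lu : Fin k) (e : CWExpr k V)
    (hv : ∀ x ∈ e.verts, (e.label x = lv ↔ x = v))
    (hu : ∀ x ∈ e.verts, (e.label x = lu ↔ x = u))
    (hvm : v ∈ e.verts) (hum : u ∈ e.verts) (hne : v ≠ u) (x y : V) :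
    (addJoin2 E v u lv lu e).edges x y ↔
      e.edges x y ∨ (E v u ∧ x = v ∧ y = u) ∨ (E u v ∧ x = u ∧ y = v) := by
  unfold addJoin2
  by_cases h1 : E v u <;> by_cases h2 : E u v <;>
    simp only [h1, h2, if_true, if_false]
  · rw [join_edges_single lu lv (CWExpr.join lv lu e) u v hu hv hum hvm hne.symm,
      join_edges_single lv lu e v u hv hu hvm hum hne]
    tauto
  · rw [join_edges_single lv lu e v u hv hu hvm hum hne]
    tauto
  · rw [join_edges_single lu lv e u v hu hv hum hvm hne.symm]
    tauto
  · tauto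

@[simp] lemma addJoins_verts (E : V → V → Prop) (v : V) (lv : Fin k) (lab : V → Fin k)
    (l : List V) (e : CWExpr k V) : (addJoins E v lv lab l e).verts = e.verts := by
  induction l with
  | nil => rfl
  | cons a t ih => simpa [addJoins] using ih

@[simp] lemma addJoins_label (E : V → V → Prop) (v : V) (lv : Fin k) (lab : V → Fin k)
    (l : List V) (e : CWExpr k V) : (addJoins E v lv lab l e).label = e.label := by
  induction l with
  | nil => rfl
  | cons a t ih => simpa [addJoins] using ih

@[simp] lemma addJoins_wf (E : V → V → Prop) (v : V) (lv : Fin k) (lab : V → Fin k)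
    (l : List V) (e : CWExpr k V) : (addJoins E v lv lab l e).wf ↔ e.wf := by
  induction l with
  | nil => exact Iff.rfl
  | cons a t ih =>
    have step : addJoins E v lv lab (a :: t) e
        = addJoin2 E v a lv (lab a) (addJoins E v lv lab t e) := rfl
    rw [step, addJoin2_wf]; exact ih

lemma addJoins_edges (E : V → V → Prop) (v : V) (lv : Fin k) (lab : V → Fin k)
    (l : List V) (e : CWExpr k V)
    (hv : ∀ x ∈ e.verts, (e.label x = lv ↔ x = v))
    (hu : ∀ u ∈ l, ∀ x ∈ e.verts, (e.label x = lab u ↔ x = u))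
    (hvm : v ∈ e.verts) (hum : ∀ u ∈ l, u ∈ e.verts) (hne : ∀ u ∈ l, v ≠ u)
    (x y : V) :
    (addJoins E v lv lab l e).edges x y ↔
      e.edges x y ∨ ∃ u ∈ l, (E v u ∧ x = v ∧ y = u) ∨ (E u v ∧ x = u ∧ y = v) := by
  induction l with
  | nil => simp [addJoins]
  | cons a t ih =>
    have step : addJoins E v lv lab (a :: t) e
        = addJoin2 E v a lv (lab a) (addJoins E v lv lab t e) := rfl
    rw [step, addJoin2_edges E v a lv (lab a) _
      (by simpa using hv)
      (by simpa using hu a (List.mem_cons_self (a := a) (l := t)))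
      (by simpa using hvm)
      (by simpa using hum a (List.mem_cons_self (a := a) (l := t)))
      (hne a (List.mem_cons_self (a := a) (l := t))),
      ih (fun u hut => hu u (List.mem_cons_of_mem a hut))
        (fun u hut => hum u (List.mem_cons_of_mem a hut))
        (fun u hut => hne u (List.mem_cons_of_mem a hut))]
    constructor
    · rintro ((h | ⟨u, hut, h⟩) | h | h)
      · exact Or.inl h
      · exact Or.inr ⟨u, List.mem_cons_of_mem a hut, h⟩
      · exact Or.inr ⟨a, List.mem_cons_self (a := a) (l := t), Or.inl h⟩
      · exact Or.inr ⟨a, List.mem_cons_self (a := a) (l := t), Or.inr h⟩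
    · rintro (h | ⟨u, hut, h⟩)
      · exact Or.inl (Or.inl h)
      · rcases List.mem_cons.1 hut with rfl | hut'
        · tauto
        · exact Or.inl (Or.inr ⟨u, hut', h⟩)

end CW7
namespace CW7

theorem build {V : Type u} [Fintype V] {E : V → V → Prop}
    (hirr : ∀ v, ¬ E v v) (hsc : ∀ u v : V, u ≠ v → E u v ∨ E v u)
    {r p : ℕ} {W : Fin r → Set V} (hdec : IsPathDecomp E W)
    (hsize : ∀ i, (W i).ncard ≤ p + 1) :
    ∀ n (R P : Finset V) (c : ℕ) (e : CWExpr (p + 2) V),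
      R.card = n → Disjoint R P →
      e.wf → e.verts = ↑P →
      (∀ u v, e.edges u v ↔ E u v ∧ u ∈ P ∧ v ∈ P) →
      (∀ u ∈ P, fstb W u ≤ c) →
      (∀ u ∈ P, lstb W u < c → e.label u = 0) →
      (∀ u ∈ P, c ≤ lstb W u → e.label u ≠ 0) →
      (∀ u ∈ P, ∀ w ∈ P, u ≠ w → c ≤ lstb W u → c ≤ lstb W w →
        e.label u ≠ e.label w) →
      (∀ x ∈ R, c ≤ fstb W x) →
      ∃ e' : CWExpr (p + 2) V, e'.wf ∧ e'.verts = ↑(P ∪ R) ∧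
        ∀ u v, e'.edges u v ↔ E u v ∧ u ∈ P ∪ R ∧ v ∈ P ∪ R := by
  haveI : NeZero (p + 2) := ⟨by omega⟩
  intro n
  induction n with
  | zero =>
    intro R P c e hcard hdis hwf hverts hedges hfst hdead halive hinj hRc
    have hR : R = ∅ := Finset.card_eq_zero.1 hcard
    subst hR
    exact ⟨e, hwf, by simpa using hverts, by simpa using hedges⟩
  | succ m ih =>
    intro R P c e hcard hdis hwf hverts hedges hfst hdead halive hinj hRc
    have hRne : R.Nonempty := Finset.card_pos.1 (by omega)
    obtain ⟨v, hvR, hmin⟩ := R.exists_min_image (fstb W) hRne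
    set c' := fstb W v with hc'def
    have hvP : v ∉ P := Finset.disjoint_left.1 hdis hvR
    have hcc' : c ≤ c' := hRc v hvR
    -- the kill list
    set D : Finset V := P.filter (fun u => c ≤ lstb W u ∧ lstb W u < c') with hD
    set K : List (Fin (p + 2)) := D.toList.map e.label with hKdef
    have hK0 : (0 : Fin (p + 2)) ∉ K := by
      intro h
      obtain ⟨u, hu, hlu⟩ := List.mem_map.1 h
      rw [Finset.mem_toList, hD, Finset.mem_filter] at hu
      exact halive u hu.1 hu.2.1 hlu
    have hmemK : ∀ u ∈ P, c ≤ lstb W u → lstb W u < c' → e.label u ∈ K := by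
      intro u hu h1 h2
      exact List.mem_map.2 ⟨u, Finset.mem_toList.2 (Finset.mem_filter.2 ⟨hu, h1, h2⟩), rfl⟩
    have hnotK : ∀ u ∈ P, c' ≤ lstb W u → e.label u ∉ K := by
      intro u hu h1 h2
      obtain ⟨w, hw, hlw⟩ := List.mem_map.1 h2
      rw [Finset.mem_toList, hD, Finset.mem_filter] at hw
      have huw : u ≠ w := by rintro rfl; omega
      exact hinj u hu w hw.1 huw (le_trans hcc' h1) hw.2.1 hlw.symm
    set e1 := kill K e with he1
    have hlab1 : ∀ u ∈ P, lstb W u < c' → e1.label u = 0 := by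
      intro u hu h1
      rw [he1, kill_label K hK0]
      by_cases h2 : c ≤ lstb W u
      · rw [if_pos (hmemK u hu h2 h1)]
      · rw [if_neg (by rw [hdead u hu (by omega)]; exact hK0), hdead u hu (by omega)]
    have hlab2 : ∀ u ∈ P, c' ≤ lstb W u → e1.label u = e.label u := by
      intro u hu h1
      rw [he1, kill_label K hK0, if_neg (hnotK u hu h1)]
    -- the alive set
    set A : Finset V := P.filter (fun u => c' ≤ lstb W u) with hA
    obtain ⟨hc'r, hvbag⟩ := fstb_mem hdec v
    have hAbag : ∀ u ∈ A, u ∈ W ⟨c', hc'r⟩ := by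
      intro u hu
      rw [hA, Finset.mem_filter] at hu
      obtain ⟨h', hm⟩ := mem_of_between hdec (le_trans (hfst u hu.1) hcc') hu.2
      exact hm
    have hvA : v ∉ A := fun h => hvP (Finset.mem_filter.1 h).1
    have hAcard : A.card ≤ p := by
      have hsub : ↑(insert v A) ⊆ W ⟨c', hc'r⟩ := by
        intro x hx
        rcases Finset.mem_insert.1 (by exact_mod_cast hx) with rfl | hx'
        · exact hvbag
        · exact hAbag x hx'
      have h1 : (insert v A).card ≤ p + 1 := by
        calc (insert v A).card = (↑(insert v A) : Set V).ncard :=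
              (Set.ncard_coe_finset _).symm
          _ ≤ (W ⟨c', hc'r⟩).ncard := Set.ncard_le_ncard hsub (Set.toFinite _)
          _ ≤ p + 1 := hsize _
      rw [Finset.card_insert_of_notMem hvA] at h1
      omega
    -- fresh label
    obtain ⟨ℓ, hℓ⟩ : ∃ ℓ : Fin (p + 2), ℓ ∉ insert (0 : Fin (p + 2)) (A.image e.label) := by
      by_contra h
      push_neg at h
      have h1 : (Finset.univ : Finset (Fin (p + 2))) ⊆ insert 0 (A.image e.label) :=
        fun x _ => h x
      have h2 := Finset.card_le_card h1
      have h3 := Finset.card_insert_le (0 : Fin (p + 2)) (A.image e.label)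
      have h4 := Finset.card_image_le (s := A) (f := e.label)
      simp only [Finset.card_univ, Fintype.card_fin] at h2
      omega
    have hℓ0 : ℓ ≠ 0 := fun h => hℓ (by rw [h]; exact Finset.mem_insert_self 0 _)
    have hℓA : ∀ u ∈ A, e.label u ≠ ℓ := by
      intro u hu h
      exact hℓ (Finset.mem_insert_of_mem (Finset.mem_image.2 ⟨u, hu, h⟩))
    -- add the new vertex
    set e2 := CWExpr.union e1 (CWExpr.intro v ℓ) with he2
    have he1verts : e1.verts = ↑P := by rw [he1, kill_verts, hverts]
    have he2verts : e2.verts = ↑(insert v P) := by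
      rw [he2, show (CWExpr.union e1 (CWExpr.intro v ℓ)).verts
          = e1.verts ∪ {v} from rfl, he1verts, Finset.coe_insert,
        Set.insert_eq, Set.union_comm]
    have he2wf : e2.wf :=
      ⟨(kill_wf K e).2 hwf, trivial, by
        rw [he1verts]
        exact Set.disjoint_singleton_right.2 (by exact_mod_cast hvP)⟩
    have hlabv : e2.label v = ℓ := by
      rw [he2, show (CWExpr.union e1 (CWExpr.intro v ℓ)).label
          = fun x => if x ∈ e1.verts then e1.label x else ℓ from rfl]
      simp only [he1verts]
      exact if_neg (by exact_mod_cast hvP)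
    have hlabP : ∀ u ∈ P, e2.label u = e1.label u := by
      intro u hu
      rw [he2, show (CWExpr.union e1 (CWExpr.intro v ℓ)).label
          = fun x => if x ∈ e1.verts then e1.label x else ℓ from rfl]
      simp only [he1verts]
      exact if_pos (by exact_mod_cast hu)
    have he2edges : ∀ x y, e2.edges x y ↔ E x y ∧ x ∈ P ∧ y ∈ P := by
      intro x y
      rw [he2, show (CWExpr.union e1 (CWExpr.intro v ℓ)).edges x y
          = (e1.edges x y ∨ False) from rfl, he1, kill_edges]
      simp [hedges]
    -- label classes in e2
    have hclassℓ : ∀ x ∈ e2.verts, (e2.label x = ℓ ↔ x = v) := by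
      intro x hx
      rw [he2verts] at hx
      rcases Finset.mem_insert.1 (by exact_mod_cast hx) with rfl | hx'
      · simp [hlabv]
      · have hxv : x ≠ v := by rintro rfl; exact hvP hx'
        simp only [hxv, iff_false]
        rw [hlabP x hx']
        by_cases h1 : c' ≤ lstb W x
        · rw [hlab2 x hx' h1]
          exact hℓA x (Finset.mem_filter.2 ⟨hx', h1⟩)
        · rw [hlab1 x hx' (by omega)]
          exact Ne.symm hℓ0
    have hclass0 : ∀ x ∈ e2.verts, (e2.label x = 0 ↔ (x ∈ P ∧ lstb W x < c')) := by
      intro x hx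
      rw [he2verts] at hx
      rcases Finset.mem_insert.1 (by exact_mod_cast hx) with rfl | hx'
      · simp [hlabv, hℓ0, hvP]
      · rw [hlabP x hx']
        by_cases h1 : c' ≤ lstb W x
        · rw [hlab2 x hx' h1]
          simp only [hx', true_and]
          constructor
          · intro h; exact absurd h (halive x hx' (le_trans hcc' h1))
          · omega
        · rw [hlab1 x hx' (by omega)]
          simp only [hx', true_and, eq_self_iff_true, true_iff]
          omega
    have hclassA : ∀ u ∈ A, ∀ x ∈ e2.verts, (e2.label x = e2.label u ↔ x = u) := by
      intro u hu x hx
      have huP : u ∈ P := (Finset.mem_filter.1 hu).1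
      have hual : c' ≤ lstb W u := (Finset.mem_filter.1 hu).2
      have hlu : e2.label u = e.label u := by rw [hlabP u huP, hlab2 u huP hual]
      rw [he2verts] at hx
      rcases Finset.mem_insert.1 (by exact_mod_cast hx) with rfl | hx'
      · have : x ≠ u := by rintro rfl; exact hvP huP
        simp only [this, iff_false, hlabv, hlu]
        exact fun h => hℓA u hu h.symm
      · by_cases hxu : x = u
        · simp [hxu]
        · simp only [hxu, iff_false]
          rw [hlabP x hx', hlu]
          by_cases h1 : c' ≤ lstb W x
          · rw [hlab2 x hx' h1]
            exact hinj x hx' u huP hxu (le_trans hcc' h1) (le_trans hcc' hual)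
          · rw [hlab1 x hx' (by omega)]
            exact fun h => halive u huP (le_trans hcc' hual) h.symm
    -- join new vertex to all dead vertices, then individual joins to alive ones
    set e3 := CWExpr.join ℓ 0 e2 with he3
    have he3edges : ∀ x y, e3.edges x y ↔
        e2.edges x y ∨ (x = v ∧ y ∈ P ∧ lstb W y < c') := by
      intro x y
      rw [he3, show (CWExpr.join ℓ 0 e2).edges x y = (e2.edges x y ∨
        (x ∈ e2.verts ∧ y ∈ e2.verts ∧ x ≠ y ∧ e2.label x = ℓ ∧ e2.label y = 0))
        from rfl]
      constructor
      · rintro (h | ⟨hx, hy, hxy, h1, h2⟩)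
        · exact Or.inl h
        · exact Or.inr ⟨(hclassℓ x hx).1 h1, (hclass0 y hy).1 h2⟩
      · rintro (h | ⟨rfl, hy, h2⟩)
        · exact Or.inl h
        · have hyv : x ≠ y := by rintro rfl; exact hvP hy
          have hyverts : y ∈ e2.verts := by
            rw [he2verts]; exact_mod_cast Finset.mem_insert_of_mem hy
          have hxverts : x ∈ e2.verts := by
            rw [he2verts]; exact_mod_cast Finset.mem_insert_self x P
          exact Or.inr ⟨hxverts, hyverts, hyv, (hclassℓ x hxverts).2 rfl,
            (hclass0 y hyverts).2 ⟨hy, h2⟩⟩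
    set e4 := addJoins E v ℓ e2.label A.toList e3 with he4
    have he4edges0 : ∀ x y, e4.edges x y ↔ e3.edges x y ∨
        ∃ u ∈ A.toList, (E v u ∧ x = v ∧ y = u) ∨ (E u v ∧ x = u ∧ y = v) := by
      intro x y
      rw [he4]
      exact addJoins_edges E v ℓ e2.label A.toList e3
        hclassℓ
        (fun u hu x hx => hclassA u (Finset.mem_toList.1 hu) x hx)
        (by show v ∈ e2.verts; rw [he2verts]; exact_mod_cast Finset.mem_insert_self v P)
        (fun u hu => by
          show u ∈ e2.verts
          rw [he2verts]
          exact_mod_cast Finset.mem_insert_of_mem (Finset.mem_filter.1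
            (Finset.mem_toList.1 hu)).1)
        (fun u hu => by
          rintro rfl
          exact hvP (Finset.mem_filter.1 (Finset.mem_toList.1 hu)).1)
        x y
    -- dead vertices have all arcs *from* v
    have hforced : ∀ y ∈ P, lstb W y < c' → ¬ E y v ∧ E v y := by
      intro y hy h1
      have hyv : y ≠ v := by rintro rfl; exact hvP hy
      have hnE : ¬ E y v := no_arc hdec h1
      exact ⟨hnE, (hsc y v hyv).resolve_left hnE⟩
    have he4edges : ∀ x y, e4.edges x y ↔
        E x y ∧ x ∈ insert v P ∧ y ∈ insert v P := by
      intro x y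
      rw [he4edges0, he3edges, he2edges]
      constructor
      · rintro ((⟨hE, hx, hy⟩ | ⟨rfl, hy, h1⟩) | ⟨u, hu, ⟨hE, rfl, rfl⟩ | ⟨hE, rfl, rfl⟩⟩)
        · exact ⟨hE, Finset.mem_insert_of_mem hx, Finset.mem_insert_of_mem hy⟩
        · exact ⟨(hforced y hy h1).2, Finset.mem_insert_self _ _,
            Finset.mem_insert_of_mem hy⟩
        · exact ⟨hE, Finset.mem_insert_self _ _, Finset.mem_insert_of_mem
            (Finset.mem_filter.1 (Finset.mem_toList.1 hu)).1⟩
        · exact ⟨hE, Finset.mem_insert_of_mem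
            (Finset.mem_filter.1 (Finset.mem_toList.1 hu)).1, Finset.mem_insert_self _ _⟩
      · rintro ⟨hE, hx, hy⟩
        rcases Finset.mem_insert.1 hx with rfl | hx' <;>
          rcases Finset.mem_insert.1 hy with h | hy'
        · exact absurd hE (by rw [h] at hE ⊢; exact hirr _)
        · by_cases h1 : lstb W y < c'
          · exact Or.inl (Or.inr ⟨rfl, hy', h1⟩)
          · exact Or.inr ⟨y, Finset.mem_toList.2 (Finset.mem_filter.2
              ⟨hy', by omega⟩), Or.inl ⟨hE, rfl, rfl⟩⟩
        · subst h
          by_cases h1 : lstb W x < c'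
          · exact absurd hE (hforced x hx' h1).1
          · exact Or.inr ⟨x, Finset.mem_toList.2 (Finset.mem_filter.2
              ⟨hx', by omega⟩), Or.inr ⟨hE, rfl, rfl⟩⟩
        · exact Or.inl (Or.inl ⟨hE, hx', hy'⟩)
    -- facts about e4
    have he4verts : e4.verts = ↑(insert v P) := by
      rw [he4, addJoins_verts, he3, show (CWExpr.join ℓ 0 e2).verts = e2.verts from rfl,
        he2verts]
    have he4wf : e4.wf := by
      rw [he4, addJoins_wf]
      exact he2wf
    have he4lab : e4.label = e2.label := by
      rw [he4, addJoins_label, he3]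
      rfl
    -- apply the induction hypothesis
    have hR'card : (R.erase v).card = m := by
      rw [Finset.card_erase_of_mem hvR, hcard]
      omega
    have hdis' : Disjoint (R.erase v) (insert v P) := by
      rw [Finset.disjoint_left]
      intro x hx hx'
      have h1 := Finset.mem_erase.1 hx
      rcases Finset.mem_insert.1 hx' with rfl | h2
      · exact h1.1 rfl
      · exact Finset.disjoint_left.1 hdis h1.2 h2
    obtain ⟨e', h'wf, h'verts, h'edges⟩ := ih (R.erase v) (insert v P) c' e4
      hR'card hdis' he4wf he4verts he4edges
      (by
        intro u hu
        rcases Finset.mem_insert.1 hu with rfl | h2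
        · exact le_refl _
        · exact le_trans (hfst u h2) hcc')
      (by
        intro u hu h1
        rcases Finset.mem_insert.1 hu with rfl | h2
        · exact absurd h1 (by have := fstb_le_lstb hdec u; omega)
        · rw [he4lab, hlabP u h2, hlab1 u h2 h1])
      (by
        intro u hu h1
        rcases Finset.mem_insert.1 hu with rfl | h2
        · rw [he4lab, hlabv]; exact hℓ0
        · rw [he4lab, hlabP u h2, hlab2 u h2 h1]
          exact halive u h2 (le_trans hcc' h1))
      (by
        intro u hu w hw huw h1 h2
        rw [he4lab]
        rcases Finset.mem_insert.1 hu with rfl | hu' <;>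
          rcases Finset.mem_insert.1 hw with h | hw'
        · exact absurd h (fun h' => huw h'.symm)
        · rw [hlabv, hlabP w hw', hlab2 w hw' h2]
          exact fun h => hℓA w (Finset.mem_filter.2 ⟨hw', h2⟩) h.symm
        · subst h
          rw [hlabv, hlabP u hu', hlab2 u hu' h1]
          exact hℓA u (Finset.mem_filter.2 ⟨hu', h1⟩)
        · rw [hlabP u hu', hlab2 u hu' h1, hlabP w hw', hlab2 w hw' h2]
          exact hinj u hu' w hw' huw (le_trans hcc' h1) (le_trans hcc' h2))
      (fun x hx => hmin x (Finset.mem_of_mem_erase hx))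
    have hset : insert v P ∪ R.erase v = P ∪ R := by
      ext x
      simp only [Finset.mem_union, Finset.mem_insert, Finset.mem_erase]
      constructor
      · rintro ((rfl | h) | ⟨-, h⟩)
        · exact Or.inr hvR
        · exact Or.inl h
        · exact Or.inr h
      · rintro (h | h)
        · exact Or.inl (Or.inr h)
        · by_cases hxv : x = v
          · exact Or.inl (Or.inl hxv)
          · exact Or.inr ⟨hxv, h⟩
    refine ⟨e', h'wf, by rw [h'verts, hset], fun u w => ?_⟩
    rw [h'edges u w, ← hset]
end CW7

/-- For every semi-complete digraph `T`, `cw(T) ≤ pw(T) + 2`. -/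
theorem stmt_7 {V : Type u} [Fintype V] (E : V → V → Prop)
    (hirr : ∀ v, ¬ E v v)
    (hsc : ∀ u v : V, u ≠ v → E u v ∨ E v u) :
    cliquewidth V E ≤ pathwidth E + 2 := by
  classical
  by_cases hV : Nonempty V
  · -- the pathwidth is attained by some decomposition
    have hne : {w : ℕ | ∃ (r : ℕ) (W : Fin r → Set V),
        IsPathDecomp E W ∧ ∀ i, (W i).ncard ≤ w + 1}.Nonempty := by
      refine ⟨Fintype.card V, 1, fun _ => Set.univ, ⟨fun v => ⟨0, trivial⟩,
        fun _ _ _ _ _ => by simp, fun u v _ => Or.inl ⟨0, trivial, trivial⟩⟩,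
        fun i => ?_⟩
      rw [Set.ncard_univ, Nat.card_eq_fintype_card]
      omega
    have hmem : pathwidth E ∈ {w : ℕ | ∃ (r : ℕ) (W : Fin r → Set V),
        IsPathDecomp E W ∧ ∀ i, (W i).ncard ≤ w + 1} := Nat.sInf_mem hne
    obtain ⟨r, W, hdec, hsize⟩ := hmem
    set p := pathwidth E with hp
    -- pick a starting vertex minimizing `fstb`
    obtain ⟨v0, -, hmin⟩ := Finset.exists_min_image (Finset.univ : Finset V)
      (CW7.fstb W) ⟨Classical.arbitrary V, Finset.mem_univ _⟩
    set ℓ0 : Fin (p + 2) := ⟨1, by omega⟩ with hℓ0def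
    have hℓ0 : ℓ0 ≠ 0 := by
      intro h
      have := congrArg Fin.val h
      rw [hℓ0def] at this
      simp at this
    obtain ⟨e', h'wf, h'verts, h'edges⟩ :=
      CW7.build hirr hsc hdec hsize (Finset.univ.erase v0).card
        (Finset.univ.erase v0) {v0} (CW7.fstb W v0) (CWExpr.intro v0 ℓ0)
        rfl
        (Finset.disjoint_singleton_right.2 (Finset.notMem_erase v0 _))
        trivial
        (by simp [CWExpr.verts])
        (by
          intro u v
          show False ↔ _
          simp only [Finset.mem_singleton, false_iff]
          rintro ⟨hE, rfl, rfl⟩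
          exact hirr _ hE)
        (by intro u hu; rw [Finset.mem_singleton] at hu; subst hu; exact le_refl _)
        (by
          intro u hu h1
          rw [Finset.mem_singleton] at hu; subst hu
          have := CW7.fstb_le_lstb hdec u
          omega)
        (fun u _ _ => hℓ0)
        (by
          intro u hu w hw huw _ _
          rw [Finset.mem_singleton] at hu hw
          exact absurd (hu.trans hw.symm) huw)
        (fun x hx => hmin x (Finset.mem_univ x))
    have hset : ({v0} : Finset V) ∪ Finset.univ.erase v0 = Finset.univ := by
      ext x
      simp only [Finset.mem_union, Finset.mem_singleton, Finset.mem_erase,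
        Finset.mem_univ, iff_true, and_true]
      by_cases h : x = v0
      · exact Or.inl h
      · exact Or.inr h
    refine Nat.sInf_le ⟨e', h'wf, ?_, ?_⟩
    · rw [h'verts, hset, Finset.coe_univ]
    · intro u v
      rw [h'edges u v, hset]
      simp
  · -- empty vertex type: no expression exists, so the cliquewidth is `0`
    have hempty : {k : ℕ | ∃ expr : CWExpr k V, expr.wf ∧ expr.verts = Set.univ ∧
        ∀ u v, expr.edges u v ↔ E u v} = ∅ := by
      ext n
      simp only [Set.mem_setOf_eq, Set.mem_empty_iff_false, iff_false, not_exists]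
      rintro ex ⟨-, -, -⟩
      obtain ⟨x, -⟩ := CW7.verts_nonempty ex
      exact hV ⟨x⟩
    rw [cliquewidth, hempty, Nat.sInf_empty]
    omega
end

section
/- Every digraph H (possibly with multiple arcs but without loops) is topologically contained in every |H|-triple, where |H| = |V(H)| + |E(H)|. That is, if a semi-complete digraph T contains a k-triple (A,B,C) and H is a digraph with |V(H)| + |E(H)| ≤ k, then there is an expansion of H in T. -/
/-- A `k`-triple in a digraph: pairwise disjoint `k`-element sets `A`, `B`, `C` with
orderings `a, b, c` such that all arcs `(a_i, b_j)` and `(b_i, c_j)` exist, and for each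
`i` the arc `(c_i, a_i)` exists. -/
def IsKTriple {V : Type*} (E : V → V → Prop) (k : ℕ) (A B C : Set V) : Prop :=
  ∃ a b c : Fin k → V,
    Function.Injective a ∧ Function.Injective b ∧ Function.Injective c ∧
    A = Set.range a ∧ B = Set.range b ∧ C = Set.range c ∧
    Disjoint A B ∧ Disjoint B C ∧ Disjoint A C ∧
    (∀ i j : Fin k, E (a i) (b j)) ∧
    (∀ i j : Fin k, E (b i) (c j)) ∧
    (∀ i : Fin k, E (c i) (a i))

/-- Every digraph `H` (possibly with multiple arcs, no loops) with
`|V(H)| + |E(H)| ≤ k` has an expansion (topological containment) in any semi-complete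
digraph containing a `k`-triple: there are an injective map on vertices and internally
vertex-disjoint directed paths realizing the arcs of `H`, whose interiors avoid all
vertex images. -/
theorem stmt_9 {V : Type*} [Fintype V] (E : V → V → Prop)
    (hirr : ∀ v, ¬ E v v)
    (hsc : ∀ u v : V, u ≠ v → E u v ∨ E v u)
    (k : ℕ) (A B C : Set V) (htriple : IsKTriple E k A B C)
    {VH EH : Type*} [Fintype VH] [Fintype EH] (src tgt : EH → VH)
    (hnoloop : ∀ e, src e ≠ tgt e)
    (hsize : Fintype.card VH + Fintype.card EH ≤ k) :
    ∃ (ηv : VH → V) (P : EH → List V),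
      Function.Injective ηv ∧
      (∀ e, (P e).Chain' E ∧ (P e).Nodup ∧
        (P e).head? = some (ηv (src e)) ∧ (P e).getLast? = some (ηv (tgt e))) ∧
      (∀ e, ∀ x ∈ (P e).tail.dropLast, x ∉ Set.range ηv) ∧
      (∀ e e', e ≠ e' → ∀ x ∈ (P e).tail.dropLast, x ∉ (P e').tail.dropLast) := by
  obtain ⟨a, b, c, ha, hb, hc, hA, hB, hC, dAB, dBC, dAC, hab, hbc, hca⟩ := htriple
  have hVk : Fintype.card VH ≤ k := le_trans (Nat.le_add_right _ _) hsize
  have hEk : Fintype.card EH ≤ k := le_trans (Nat.le_add_left _ _) hsize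
  obtain ⟨ιV⟩ : Nonempty (VH ↪ Fin k) := Function.Embedding.nonempty_of_card_le
    (by simpa using hVk)
  obtain ⟨ιE⟩ : Nonempty (EH ↪ Fin k) := Function.Embedding.nonempty_of_card_le
    (by simpa using hEk)
  have hmA : ∀ i, a i ∈ A := fun i => hA ▸ Set.mem_range_self i
  have hmB : ∀ i, b i ∈ B := fun i => hB ▸ Set.mem_range_self i
  have hmC : ∀ i, c i ∈ C := fun i => hC ▸ Set.mem_range_self i
  have hab_ne : ∀ i j, a i ≠ b j := fun i j h =>
    Set.disjoint_left.mp dAB (hmA i) (by rw [h]; exact hmB j)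
  have hbc_ne : ∀ i j, b i ≠ c j := fun i j h =>
    Set.disjoint_left.mp dBC (hmB i) (by rw [h]; exact hmC j)
  have hac_ne : ∀ i j, a i ≠ c j := fun i j h =>
    Set.disjoint_left.mp dAC (hmA i) (by rw [h]; exact hmC j)
  refine ⟨fun v => b (ιV v), fun e => [b (ιV (src e)), c (ιE e), a (ιE e), b (ιV (tgt e))],
    fun u v h => ιV.injective (hb h), fun e => ?_, fun e x hx => ?_, fun e e' hee' x hx hx' => ?_⟩
  · refine ⟨?_, ?_, rfl, rfl⟩
    · show List.IsChain E _
      exact List.isChain_cons_cons.mpr ⟨hbc _ _, List.isChain_cons_cons.mpr ⟨hca _, List.isChain_cons_cons.mpr ⟨hab _ _, List.isChain_singleton _⟩⟩⟩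
    · simp only [List.nodup_cons, List.mem_cons, List.not_mem_nil, List.nodup_nil,
        or_false, not_or, and_true]
      refine ⟨⟨hbc_ne _ _, (hab_ne _ _).symm, fun h => hnoloop e (ιV.injective (hb h))⟩,
        ⟨fun h => hac_ne _ _ h.symm, fun h => hbc_ne _ _ h.symm⟩, hab_ne _ _, not_false⟩
  · simp only [List.tail_cons, List.dropLast, List.mem_cons, List.not_mem_nil, or_false] at hx
    rintro ⟨v, hv⟩
    rcases hx with rfl | rfl
    · exact hbc_ne _ _ hv
    · exact hab_ne _ _ hv.symm
  · simp only [List.tail_cons, List.dropLast, List.mem_cons, List.not_mem_nil, or_false]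
      at hx hx'
    have hne : ιE e ≠ ιE e' := fun h => hee' (ιE.injective h)
    rcases hx with rfl | rfl <;> rcases hx' with h | h
    · exact hne (hc h)
    · exact hac_ne _ _ h.symm
    · exact hac_ne _ _ h
    · exact hne (ha h)
end

section
/- Let T be a semi-complete digraph and W ⊆ V(T) with |W| ≥ 5k + 4ℓ such that W is not (k,ℓ)-separable. Let S = T[W] and let Z = {w ∈ W : d_S^+(w) ≥ k+ℓ and d_S^-(w) ≥ k+ℓ}. Then |Z| ≥ |W| − 4(k+ℓ) + 2 ≥ k, and every subset of Z of cardinality k is a k-jungle in T. -/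
/-- `W` is `(k,ℓ)`-separable: there is a separation `(A,B)` of order at most `k` with
`|W \ A| ≥ ℓ` and `|W \ B| ≥ ℓ`. -/
def Separable {V : Type*} [Fintype V] [DecidableEq V]
    (E : V → V → Prop) (k ℓ : ℕ) (W : Finset V) : Prop :=
  ∃ A B : Finset V, IsSeparationF E A B ∧ (A ∩ B).card ≤ k ∧
    ℓ ≤ (W \ A).card ∧ ℓ ≤ (W \ B).card

/-- A `k`-jungle: a `k`-element set `Z` such that no two of its members are separated by
a separation of order less than `k`. -/
def IsJungle {V : Type*} [Fintype V] [DecidableEq V]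
    (E : V → V → Prop) (k : ℕ) (Z : Finset V) : Prop :=
  Z.card = k ∧ ∀ x ∈ Z, ∀ y ∈ Z,
    ¬ ∃ A B : Finset V, IsSeparationF E A B ∧ (A ∩ B).card < k ∧
      x ∈ A \ B ∧ y ∈ B \ A

/-- In a semicomplete digraph, a set in which every vertex has out-degree `< d`
(within the set) has at most `2d - 1` elements. -/
lemma outdeg_small_bound {V : Type*} [Fintype V] [DecidableEq V]
    (E : V → V → Prop) [DecidableRel E]
    (hsc : ∀ u v : V, u ≠ v → E u v ∨ E v u)
    (d : ℕ) (hd : 1 ≤ d) (X : Finset V)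
    (h : ∀ x ∈ X, (X.filter (fun u => E x u)).card < d) :
    X.card ≤ 2 * d - 1 := by
  set S := ∑ x ∈ X, (X.filter (fun u => E x u)).card with hSdef
  have hS1 : S ≤ X.card * (d - 1) := by
    calc S ≤ ∑ _x ∈ X, (d - 1) :=
          Finset.sum_le_sum fun x hx => Nat.le_pred_of_lt (h x hx)
      _ = X.card * (d - 1) := by rw [Finset.sum_const, smul_eq_mul]
  have hS2 : X.card * (X.card - 1) ≤ 2 * S := by
    have e1 : X.card * (X.card - 1)
        = ∑ x ∈ X, ∑ u ∈ X, (if x ≠ u then (1:ℕ) else 0) := by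
      have key : ∀ x ∈ X, ∑ u ∈ X, (if x ≠ u then (1:ℕ) else 0) = X.card - 1 := by
        intro x hx
        rw [← Finset.card_filter, Finset.filter_ne, Finset.card_erase_of_mem hx]
      rw [Finset.sum_congr rfl key, Finset.sum_const, smul_eq_mul]
    have a1 : ∑ x ∈ X, ∑ u ∈ X, (if E x u then (1:ℕ) else 0) = S := by
      rw [hSdef]
      exact Finset.sum_congr rfl fun x _ => (Finset.card_filter _ _).symm
    have a2 : ∑ x ∈ X, ∑ u ∈ X, (if E u x then (1:ℕ) else 0) = S := by
      rw [Finset.sum_comm, hSdef]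
      exact Finset.sum_congr rfl fun x _ => (Finset.card_filter _ _).symm
    have e2 : 2 * S
        = ∑ x ∈ X, ∑ u ∈ X, ((if E x u then (1:ℕ) else 0) + (if E u x then 1 else 0)) := by
      simp only [Finset.sum_add_distrib, a1, a2, two_mul]
    rw [e1, e2]
    refine Finset.sum_le_sum fun x _ => Finset.sum_le_sum fun u _ => ?_
    by_cases hxu : x = u
    · simp [hxu]
    · rw [if_pos hxu]
      rcases hsc x u hxu with h' | h'
      · rw [if_pos h']; exact Nat.le_add_right 1 _
      · rw [if_pos h']; exact Nat.le_add_left 1 _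
  have hmul : X.card * (X.card - 1) ≤ X.card * (2 * (d - 1)) := by
    calc X.card * (X.card - 1) ≤ 2 * S := hS2
      _ ≤ 2 * (X.card * (d - 1)) := by omega
      _ = X.card * (2 * (d - 1)) := by ring
  rcases Nat.eq_zero_or_pos X.card with h0 | h0
  · omega
  · have := Nat.le_of_mul_le_mul_left hmul h0
    omega

/-- In-degree version of `outdeg_small_bound`. -/
lemma indeg_small_bound {V : Type*} [Fintype V] [DecidableEq V]
    (E : V → V → Prop) [DecidableRel E]
    (hsc : ∀ u v : V, u ≠ v → E u v ∨ E v u)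
    (d : ℕ) (hd : 1 ≤ d) (X : Finset V)
    (h : ∀ x ∈ X, (X.filter (fun u => E u x)).card < d) :
    X.card ≤ 2 * d - 1 := by
  haveI : DecidableRel (fun u v : V => E v u) :=
    fun u v => inferInstanceAs (Decidable (E v u))
  refine outdeg_small_bound (fun u v => E v u)
    (fun u v huv => hsc v u (Ne.symm huv)) d hd X fun x hx => ?_
  have hlt := h x hx
  convert hlt using 2 <;> congr!

/-- If `W` has at least `5k + 4ℓ` vertices and is not `(k,ℓ)`-separable in
a semi-complete digraph `T`, then the set `Z` of vertices of `W` with in- and out-degree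
at least `k + ℓ` inside `T[W]` has size at least `|W| − 4(k+ℓ) + 2 ≥ k`, and every
`k`-element subset of `Z` is a `k`-jungle. -/
theorem stmt_10 {V : Type*} [Fintype V] [DecidableEq V]
    (E : V → V → Prop) [DecidableRel E]
    (hirr : ∀ v, ¬ E v v)
    (hsc : ∀ u v : V, u ≠ v → E u v ∨ E v u)
    (k ℓ : ℕ) (W : Finset V)
    (hW : 5 * k + 4 * ℓ ≤ W.card)
    (hns : ¬ Separable E k ℓ W)
    (Z : Finset V)
    (hZ : Z = W.filter (fun w =>
      k + ℓ ≤ (W.filter (fun u => E w u)).card ∧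
      k + ℓ ≤ (W.filter (fun u => E u w)).card)) :
    (W.card - 4 * (k + ℓ) + 2 ≤ Z.card ∧ k ≤ Z.card) ∧
    ∀ Z' ⊆ Z, Z'.card = k → IsJungle E k Z' := by
  subst hZ
  -- dispose of ℓ = 0
  rcases Nat.eq_zero_or_pos ℓ with rfl | hl
  · exact absurd ⟨Finset.univ, ∅, ⟨by simp, by simp⟩, by simp, Nat.zero_le _,
      Nat.zero_le _⟩ hns
  set d := k + ℓ with hd
  have hd1 : 1 ≤ d := by omega
  set Z := W.filter (fun w =>
      d ≤ (W.filter (fun u => E w u)).card ∧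
      d ≤ (W.filter (fun u => E u w)).card) with hZdef
  constructor
  · -- cardinality bounds
    set X1 := W.filter (fun w => (W.filter (fun u => E w u)).card < d) with hX1def
    set X2 := W.filter (fun w => (W.filter (fun u => E u w)).card < d) with hX2def
    have hX1 : X1.card ≤ 2 * d - 1 := by
      refine outdeg_small_bound E hsc d hd1 X1 fun x hx => ?_
      have hsub : X1.filter (fun u => E x u) ⊆ W.filter (fun u => E x u) :=
        Finset.filter_subset_filter _ (Finset.filter_subset _ _)
      exact lt_of_le_of_lt (Finset.card_le_card hsub) (Finset.mem_filter.mp hx).2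
    have hX2 : X2.card ≤ 2 * d - 1 := by
      refine indeg_small_bound E hsc d hd1 X2 fun x hx => ?_
      have hsub : X2.filter (fun u => E u x) ⊆ W.filter (fun u => E u x) :=
        Finset.filter_subset_filter _ (Finset.filter_subset _ _)
      exact lt_of_le_of_lt (Finset.card_le_card hsub) (Finset.mem_filter.mp hx).2
    have hZW : Z ⊆ W := Finset.filter_subset _ _
    have hsub : W \ Z ⊆ X1 ∪ X2 := by
      intro w hw
      rw [Finset.mem_sdiff] at hw
      obtain ⟨hwW, hwZ⟩ := hw
      rw [hZdef, Finset.mem_filter] at hwZ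
      push_neg at hwZ
      rw [Finset.mem_union, hX1def, hX2def, Finset.mem_filter, Finset.mem_filter]
      by_cases h1 : d ≤ (W.filter (fun u => E w u)).card
      · exact Or.inr ⟨hwW, hwZ hwW h1⟩
      · exact Or.inl ⟨hwW, Nat.lt_of_not_le h1⟩
    have hcard : W.card - Z.card ≤ (2 * d - 1) + (2 * d - 1) := by
      calc W.card - Z.card = (W \ Z).card := (Finset.card_sdiff_of_subset hZW).symm
        _ ≤ (X1 ∪ X2).card := Finset.card_le_card hsub
        _ ≤ X1.card + X2.card := Finset.card_union_le _ _
        _ ≤ (2 * d - 1) + (2 * d - 1) := Nat.add_le_add hX1 hX2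
    have hZWc : Z.card ≤ W.card := Finset.card_le_card hZW
    constructor <;> omega
  · -- jungle part
    intro Z' hZ' hcard
    refine ⟨hcard, fun x hx y hy => ?_⟩
    rintro ⟨A, B, hAB, hord, hxAB, hyBA⟩
    have hxZ := hZ' hx
    have hyZ := hZ' hy
    rw [hZdef, Finset.mem_filter] at hxZ hyZ
    apply hns
    refine ⟨A, B, hAB, hord.le, ?_, ?_⟩
    · -- ℓ ≤ (W \ A).card  using in-neighbors of y
      set M := W.filter (fun u => E u y) with hM
      have hMB : M ⊆ B := by
        intro u hu
        rw [hM, Finset.mem_filter] at hu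
        by_contra huB
        have huniv : u ∈ A ∪ B := by rw [hAB.1]; exact Finset.mem_univ u
        rw [Finset.mem_union] at huniv
        have huA : u ∈ A \ B := Finset.mem_sdiff.mpr ⟨huniv.resolve_right huB, huB⟩
        exact hAB.2 u huA y hyBA hu.2
      have hMcard : d ≤ M.card := hyZ.2.2
      have hint : (M ∩ A).card < k := by
        refine lt_of_le_of_lt (Finset.card_le_card ?_) hord
        intro u hu
        rw [Finset.mem_inter] at hu ⊢
        exact ⟨hu.2, hMB hu.1⟩
      have hsplit : (M ∩ A).card + (M \ A).card = M.card :=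
        Finset.card_inter_add_card_sdiff M A
      have hMW : M \ A ⊆ W \ A :=
        Finset.sdiff_subset_sdiff (Finset.filter_subset _ _) le_rfl
      have := Finset.card_le_card hMW
      omega
    · -- ℓ ≤ (W \ B).card  using out-neighbors of x
      set N := W.filter (fun u => E x u) with hN
      have hNA : N ⊆ A := by
        intro u hu
        rw [hN, Finset.mem_filter] at hu
        by_contra huA
        have huniv : u ∈ A ∪ B := by rw [hAB.1]; exact Finset.mem_univ u
        rw [Finset.mem_union] at huniv
        have huB : u ∈ B \ A := Finset.mem_sdiff.mpr ⟨huniv.resolve_left huA, huA⟩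
        exact hAB.2 x hxAB u huB hu.2
      have hNcard : d ≤ N.card := hxZ.2.1
      have hint : (N ∩ B).card < k := by
        refine lt_of_le_of_lt (Finset.card_le_card ?_) hord
        intro u hu
        rw [Finset.mem_inter] at hu ⊢
        exact ⟨hNA hu.1, hu.2⟩
      have hsplit : (N ∩ B).card + (N \ B).card = N.card :=
        Finset.card_inter_add_card_sdiff N B
      have hNW : N \ B ⊆ W \ B :=
        Finset.sdiff_subset_sdiff (Finset.filter_subset _ _) le_rfl
      have := Finset.card_le_card hNW
      omega
end

section
/- In a semi-complete digraph, if a set Z of vertices has the property that every z ∈ Z has both in-degree and out-degree at least k + ℓ − 1 + 1 = k + ℓ within T[W] (for W ⊇ Z not (k,ℓ)-separable), then no separation of order less than k separates any vertex of Z from any other. In particular, for distinct x, y ∈ Z there is no separation (A,B) of order < k with x ∈ A∖B, y ∈ B∖A. -/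
/-- In a semi-complete digraph, if `W` is not `(k,ℓ)`-separable and every
vertex of `Z ⊆ W` has in-degree and out-degree at least `k + ℓ` within `T[W]`, then no
separation of order less than `k` separates one vertex of `Z` from another: for distinct
`x, y ∈ Z` there is no separation `(A,B)` of order `< k` with `x ∈ A∖B`, `y ∈ B∖A`. -/
theorem stmt_11 {V : Type*} [Fintype V] [DecidableEq V]
    (E : V → V → Prop) [DecidableRel E]
    (hirr : ∀ v, ¬ E v v)
    (hsc : ∀ u v : V, u ≠ v → E u v ∨ E v u)
    (k ℓ : ℕ) (W : Finset V)
    (hns : ¬ Separable E k ℓ W)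
    (Z : Finset V)
    (hZ : Z = W.filter (fun w =>
      k + ℓ ≤ (W.filter (fun u => E w u)).card ∧
      k + ℓ ≤ (W.filter (fun u => E u w)).card)) :
    ∀ x ∈ Z, ∀ y ∈ Z, x ≠ y →
      ¬ ∃ A B : Finset V, IsSeparationF E A B ∧ (A ∩ B).card < k ∧
        x ∈ A \ B ∧ y ∈ B \ A := by
  subst hZ
  intro x hx y hy hxy h
  obtain ⟨A, B, ⟨hU, hE⟩, hord, hxA, hyB⟩ := h
  simp only [Finset.mem_filter] at hx hy
  obtain ⟨hxW, hxout, hxin⟩ := hx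
  obtain ⟨hyW, hyout, hyin⟩ := hy
  rw [Separable] at hns
  push_neg at hns
  have hkey := hns A B ⟨hU, hE⟩ (le_of_lt hord)
  rcases lt_or_ge (W \ A).card ℓ with hcA | hcA
  · -- use in-neighbors of y: they all lie in B
    have hsub : W.filter (fun u => E u y) ⊆ (A ∩ B) ∪ (W \ A) := by
      intro u hu
      rw [Finset.mem_filter] at hu
      obtain ⟨huW, hEu⟩ := hu
      have huB : u ∈ B := by
        by_contra hnB
        have huA : u ∈ A := by
          have := Finset.mem_univ u
          rw [← hU, Finset.mem_union] at this
          tauto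
        exact hE u (Finset.mem_sdiff.mpr ⟨huA, hnB⟩) y hyB hEu
      by_cases huA : u ∈ A
      · exact Finset.mem_union_left _ (Finset.mem_inter.mpr ⟨huA, huB⟩)
      · exact Finset.mem_union_right _ (Finset.mem_sdiff.mpr ⟨huW, huA⟩)
    have h1 := Finset.card_le_card hsub
    have h2 := Finset.card_union_le (A ∩ B) (W \ A)
    omega
  · have hcB := hkey hcA
    -- use out-neighbors of x: they all lie in A
    have hsub : W.filter (fun u => E x u) ⊆ (A ∩ B) ∪ (W \ B) := by
      intro u hu
      rw [Finset.mem_filter] at hu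
      obtain ⟨huW, hEu⟩ := hu
      have huA : u ∈ A := by
        by_contra hnA
        have huB : u ∈ B := by
          have := Finset.mem_univ u
          rw [← hU, Finset.mem_union] at this
          tauto
        exact hE x hxA u (Finset.mem_sdiff.mpr ⟨huB, hnA⟩) hEu
      by_cases huB : u ∈ B
      · exact Finset.mem_union_left _ (Finset.mem_inter.mpr ⟨huA, huB⟩)
      · exact Finset.mem_union_right _ (Finset.mem_sdiff.mpr ⟨huW, huB⟩)
    have h1 := Finset.card_le_card hsub
    have h2 := Finset.card_union_le (A ∩ B) (W \ B)
    omega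
end

section
/- Let T be a semi-complete digraph containing a p-triple (A,B,C) with p > 4k, and let η be an immersion of a digraph H with |H| = k into T minimizing the total sum of lengths of the paths η(E(H)), where all paths are simple. Then every path of η(E(H)) uses at most 2 arcs of the matching {(c_i, a_i) : 1 ≤ i ≤ p} between C and A. -/
/-- An immersion of a digraph `H` (arcs `EH` with endpoints `src`, `tgt`) into the
digraph `(V, E)`: an injective map on vertices together with pairwise arc-disjoint
directed paths realizing the arcs. -/
def IsImmersion {V VH EH : Type*} (E : V → V → Prop) (src tgt : EH → VH)
    (ηv : VH → V) (P : EH → List V) : Prop :=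
  Function.Injective ηv ∧
  (∀ e, (P e).Chain' E ∧
    (P e).head? = some (ηv (src e)) ∧ (P e).getLast? = some (ηv (tgt e))) ∧
  (∀ e e', e ≠ e' → ∀ p : V × V,
    p ∈ (P e).zip (P e).tail → p ∉ (P e').zip (P e').tail)

/-- Total sum of lengths (numbers of arcs) of a family of paths. -/
def totalLen {V EH : Type*} [Fintype EH] (P : EH → List V) : ℕ :=
  ∑ e, ((P e).length - 1)

lemma mem_arcs {V : Type*} {L : List V} {x y : V} :
    (x, y) ∈ L.zip L.tail ↔ ∃ t, L[t]? = some x ∧ L[t+1]? = some y := by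
  constructor
  · intro h
    obtain ⟨i, hi, hval⟩ := List.mem_iff_getElem.1 h
    rw [List.length_zip, List.length_tail] at hi
    have h1 : i < L.length := by omega
    have h2 : i + 1 < L.length := by omega
    refine ⟨i, ?_, ?_⟩
    · rw [List.getElem?_eq_getElem h1]
      rw [List.getElem_zip] at hval
      simp_all [Prod.ext_iff]
    · rw [List.getElem?_eq_getElem h2]
      rw [List.getElem_zip] at hval
      have ht := List.getElem_tail (l := L) (i := i) (by rw [List.length_tail]; omega)
      simp_all [Prod.ext_iff]
  · rintro ⟨t, hx, hy⟩
    have h2 : t + 1 < L.length := (List.getElem?_eq_some_iff.1 hy).1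
    have h1 : t < L.length := by omega
    refine List.mem_iff_getElem.2 ⟨t, ?_, ?_⟩
    · rw [List.length_zip, List.length_tail]; omega
    · rw [List.getElem_zip, List.getElem_tail]
      rw [List.getElem?_eq_getElem h1] at hx
      rw [List.getElem?_eq_getElem h2] at hy
      simp_all

lemma chain'_iff_arcs {V : Type*} {E : V → V → Prop} {L : List V} :
    L.Chain' E ↔ ∀ x y : V, (x, y) ∈ L.zip L.tail → E x y := by
  rw [List.Chain', List.isChain_iff_getElem]
  constructor
  · intro h x y hxy
    obtain ⟨t, hx, hy⟩ := mem_arcs.1 hxy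
    have h2 : t + 1 < L.length := (List.getElem?_eq_some_iff.1 hy).1
    have := h t (by omega)
    rw [List.getElem?_eq_getElem (by omega : t < L.length)] at hx
    rw [List.getElem?_eq_getElem h2] at hy
    rw [Option.some.injEq] at hx hy
    rwa [hx, hy] at this
  · intro h t ht
    exact h _ _ (mem_arcs.2 ⟨t, List.getElem?_eq_getElem (by omega),
      List.getElem?_eq_getElem (by omega)⟩)

lemma nodup_pos_eq {V : Type*} {L : List V} (h : L.Nodup) {s t : ℕ} {x : V}
    (hs : L[s]? = some x) (ht : L[t]? = some x) : s = t := by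
  obtain ⟨hs1, hs2⟩ := List.getElem?_eq_some_iff.1 hs
  obtain ⟨ht1, ht2⟩ := List.getElem?_eq_some_iff.1 ht
  exact (h.getElem_inj_iff).1 (hs2.trans ht2.symm)

lemma shortcut {V VH EH : Type*} [DecidableEq V] [Fintype VH] [Fintype EH]
    (E : V → V → Prop) (src tgt : EH → VH) (k p : ℕ) (hp : 4 * k < p)
    (a b c : Fin p → V) (hbinj : Function.Injective b)
    (hab : ∀ i j : Fin p, E (a i) (b j)) (hbc : ∀ i j : Fin p, E (b i) (c j))
    (hac : ∀ i j : Fin p, a i ≠ c j)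
    (hk : Fintype.card VH + Fintype.card EH = k)
    (ηv : VH → V) (P : EH → List V)
    (himm : IsImmersion E src tgt ηv P)
    (hsimple : ∀ e, (P e).Nodup)
    (hmin : ∀ (ηv' : VH → V) (P' : EH → List V),
      IsImmersion E src tgt ηv' P' → totalLen P ≤ totalLen P')
    (e : EH) (i1 i2 i3 : Fin p) (t1 t2 t3 : ℕ)
    (h12 : t1 < t2) (h23 : t2 < t3)
    (hc1 : (P e)[t1]? = some (c i1)) (ha1 : (P e)[t1+1]? = some (a i1))
    (hc2 : (P e)[t2]? = some (c i2)) (ha2 : (P e)[t2+1]? = some (a i2))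
    (hc3 : (P e)[t3]? = some (c i3)) (ha3 : (P e)[t3+1]? = some (a i3)) :
    False := by
  classical
  set L := P e with hL
  set n := L.length with hn
  have hn3 : t3 + 1 < n := (List.getElem?_eq_some_iff.1 ha3).1
  have g1 : t1 + 2 ≤ t2 := by
    rcases Nat.lt_or_ge (t1 + 1) t2 with h | h
    · omega
    · exfalso
      have hE : t2 = t1 + 1 := by omega
      rw [hE] at hc2
      exact hac i1 i2 (Option.some.inj (ha1.symm.trans hc2))
  have g2 : t2 + 2 ≤ t3 := by
    rcases Nat.lt_or_ge (t2 + 1) t3 with h | h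
    · omega
    · exfalso
      have hE : t3 = t2 + 1 := by omega
      rw [hE] at hc3
      exact hac i2 i3 (Option.some.inj (ha2.symm.trans hc3))
  -- choose a good middle vertex b j
  set bad1 : Finset (Fin p) := Finset.univ.filter
    (fun j => ∃ e', e' ≠ e ∧ (a i1, b j) ∈ (P e').zip (P e').tail) with hbad1
  set bad2 : Finset (Fin p) := Finset.univ.filter
    (fun j => ∃ e', e' ≠ e ∧ (b j, c i3) ∈ (P e').zip (P e').tail) with hbad2
  have hcard1 : bad1.card ≤ Fintype.card EH := by
    have := Finset.card_le_card_of_injOn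
      (f := fun j : Fin p =>
        if h : ∃ e', e' ≠ e ∧ (a i1, b j) ∈ (P e').zip (P e').tail then h.choose else e)
      (s := bad1) (t := Finset.univ) (fun _ _ => Finset.mem_univ _) ?_
    · simpa using this
    · intro j hj j' hj' hjj
      simp only [Finset.coe_filter, Set.mem_setOf_eq, hbad1, Finset.mem_coe,
        Finset.mem_filter] at hj hj'
      obtain h := hj.2
      obtain h' := hj'.2
      dsimp only at hjj
      rw [dif_pos h, dif_pos h'] at hjj
      obtain ⟨-, hm⟩ := h.choose_spec
      obtain ⟨-, hm'⟩ := h'.choose_spec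
      rw [hjj] at hm
      obtain ⟨s, hs1, hs2⟩ := mem_arcs.1 hm
      obtain ⟨s', hs1', hs2'⟩ := mem_arcs.1 hm'
      have hss : s = s' := nodup_pos_eq (hsimple _) hs1 hs1'
      rw [hss] at hs2
      exact hbinj (Option.some.inj (hs2.symm.trans hs2'))
  have hcard2 : bad2.card ≤ Fintype.card EH := by
    have := Finset.card_le_card_of_injOn
      (f := fun j : Fin p =>
        if h : ∃ e', e' ≠ e ∧ (b j, c i3) ∈ (P e').zip (P e').tail then h.choose else e)
      (s := bad2) (t := Finset.univ) (fun _ _ => Finset.mem_univ _) ?_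
    · simpa using this
    · intro j hj j' hj' hjj
      simp only [Finset.coe_filter, Set.mem_setOf_eq, hbad2, Finset.mem_coe,
        Finset.mem_filter] at hj hj'
      obtain h := hj.2
      obtain h' := hj'.2
      dsimp only at hjj
      rw [dif_pos h, dif_pos h'] at hjj
      obtain ⟨-, hm⟩ := h.choose_spec
      obtain ⟨-, hm'⟩ := h'.choose_spec
      rw [hjj] at hm
      obtain ⟨s, hs1, hs2⟩ := mem_arcs.1 hm
      obtain ⟨s', hs1', hs2'⟩ := mem_arcs.1 hm'
      have hss : s + 1 = s' + 1 := nodup_pos_eq (hsimple _) hs2 hs2'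
      have hss' : s = s' := by omega
      rw [hss'] at hs1
      exact hbinj (Option.some.inj (hs1.symm.trans hs1'))
  have hEHk : Fintype.card EH ≤ k := by omega
  have hcompl : ((bad1 ∪ bad2)ᶜ : Finset (Fin p)).Nonempty := by
    rw [← Finset.card_pos, Finset.card_compl, Fintype.card_fin]
    have := Finset.card_union_le bad1 bad2
    omega
  obtain ⟨j, hj⟩ := hcompl
  rw [Finset.mem_compl, Finset.mem_union] at hj
  push_neg at hj
  have hj1 : ∀ e', e' ≠ e → (a i1, b j) ∉ (P e').zip (P e').tail := by
    intro e' he' hm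
    apply hj.1
    rw [hbad1, Finset.mem_filter]
    exact ⟨Finset.mem_univ _, e', he', hm⟩
  have hj2 : ∀ e', e' ≠ e → (b j, c i3) ∉ (P e').zip (P e').tail := by
    intro e' he' hm
    apply hj.2
    rw [hbad2, Finset.mem_filter]
    exact ⟨Finset.mem_univ _, e', he', hm⟩
  -- the shortcut path
  set L' : List V := L.take (t1 + 2) ++ b j :: L.drop t3 with hL'
  have htake : (L.take (t1 + 2)).length = t1 + 2 := by
    rw [List.length_take]; omega
  have hlen' : L'.length = t1 + 3 + (n - t3) := by
    simp only [hL', List.length_append, htake, List.length_cons, List.length_drop]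
    omega
  have e1 : ∀ t, t < t1 + 2 → L'[t]? = L[t]? := by
    intro t ht
    rw [hL', List.getElem?_append_left (by rw [htake]; exact ht),
      List.getElem?_take_of_lt ht]
  have e2 : L'[t1+2]? = some (b j) := by
    rw [hL', List.getElem?_append_right (by rw [htake]), htake]
    simp
  have e3 : ∀ s, L'[t1+3+s]? = L[t3+s]? := by
    intro s
    rw [hL', List.getElem?_append_right (by rw [htake]; omega), htake]
    have hidx : t1 + 3 + s - (t1 + 2) = s + 1 := by omega
    rw [hidx, List.getElem?_cons_succ, List.getElem?_drop]
  have harc : ∀ x y : V, (x, y) ∈ L'.zip L'.tail →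
      (x, y) ∈ L.zip L.tail ∨ (x = a i1 ∧ y = b j) ∨ (x = b j ∧ y = c i3) := by
    intro x y hxy
    obtain ⟨t, hx, hy⟩ := mem_arcs.1 hxy
    by_cases c1 : t + 1 < t1 + 2
    · left
      exact mem_arcs.2 ⟨t, by rw [← e1 t (by omega)]; exact hx,
        by rw [← e1 (t+1) c1]; exact hy⟩
    · by_cases c2 : t = t1 + 1
      · right; left
        rw [c2] at hx hy
        refine ⟨?_, ?_⟩
        · have := (e1 (t1+1) (by omega)).symm.trans hx
          rw [ha1] at this
          exact (Option.some.inj this).symm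
        · exact Option.some.inj (hy.symm.trans e2)
      · by_cases c3 : t = t1 + 2
        · right; right
          rw [c3] at hx hy
          refine ⟨Option.some.inj (hx.symm.trans e2), ?_⟩
          have h30 := e3 0
          have := h30.symm.trans hy
          rw [Nat.add_zero, hc3] at this
          exact (Option.some.inj this).symm
        · left
          have hts : t = t1 + 3 + (t - (t1 + 3)) := by omega
          rw [hts] at hx
          rw [show t + 1 = t1 + 3 + (t - (t1+3) + 1) from by omega] at hy
          rw [e3 _] at hx
          rw [e3 _] at hy
          refine mem_arcs.2 ⟨t3 + (t - (t1+3)), hx, ?_⟩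
          rw [show t3 + (t - (t1+3)) + 1 = t3 + (t - (t1+3) + 1) from by omega]
          exact hy
  have hchain : L'.Chain' E := by
    rw [chain'_iff_arcs]
    intro x y hxy
    rcases harc x y hxy with h | ⟨hx, hy⟩ | ⟨hx, hy⟩
    · exact chain'_iff_arcs.1 (himm.2.1 e).1 x y h
    · rw [hx, hy]; exact hab i1 j
    · rw [hx, hy]; exact hbc j i3
  have hhead : L'.head? = L.head? := by
    rw [List.head?_eq_getElem?, List.head?_eq_getElem?, e1 0 (by omega)]
  have hlast : L'.getLast? = L.getLast? := by
    rw [List.getLast?_eq_getElem?, List.getLast?_eq_getElem?, hlen']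
    rw [show t1 + 3 + (n - t3) - 1 = t1 + 3 + (n - t3 - 1) from by omega, e3 _]
    rw [show t3 + (n - t3 - 1) = L.length - 1 from by omega]
  set P' : EH → List V := Function.update P e L' with hP'
  have himm' : IsImmersion E src tgt ηv P' := by
    refine ⟨himm.1, ?_, ?_⟩
    · intro e'
      by_cases he : e' = e
      · subst he
        rw [hP', Function.update_self]
        exact ⟨hchain, hhead ▸ (himm.2.1 e').2.1, hlast ▸ (himm.2.1 e').2.2⟩
      · rw [hP', Function.update_of_ne he]
        exact himm.2.1 e'
    · intro e' e'' hne pr hpr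
      by_cases h1 : e' = e
      · subst h1
        rw [hP', Function.update_self] at hpr
        rw [hP', Function.update_of_ne (Ne.symm hne)]
        obtain ⟨x, y⟩ := pr
        rcases harc x y hpr with h | ⟨hx, hy⟩ | ⟨hx, hy⟩
        · exact himm.2.2 e' e'' hne _ h
        · rw [hx, hy]; exact hj1 e'' (Ne.symm hne)
        · rw [hx, hy]; exact hj2 e'' (Ne.symm hne)
      · by_cases h2 : e'' = e
        · subst h2
          rw [hP', Function.update_of_ne h1] at hpr
          rw [hP', Function.update_self]
          obtain ⟨x, y⟩ := pr
          intro hcon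
          rcases harc x y hcon with h | ⟨hx, hy⟩ | ⟨hx, hy⟩
          · exact himm.2.2 e' e'' hne _ hpr h
          · exact hj1 e' h1 (by rw [← hx, ← hy]; exact hpr)
          · exact hj2 e' h1 (by rw [← hx, ← hy]; exact hpr)
        · rw [hP', Function.update_of_ne h1] at hpr
          rw [hP', Function.update_of_ne h2]
          exact himm.2.2 e' e'' hne _ hpr
  have hlt : totalLen P' < totalLen P := by
    unfold totalLen
    have hupd : ∀ e', (P' e').length - 1 =
        Function.update (fun e'' => (P e'').length - 1) e (L'.length - 1) e' := by
      intro e'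
      by_cases he : e' = e
      · subst he; simp [hP']
      · simp [hP', Function.update_of_ne he]
    simp only [hupd]
    rw [Finset.sum_update_of_mem (Finset.mem_univ e)]
    rw [Finset.sum_eq_sum_sdiff_singleton_add (Finset.mem_univ e)
      (fun e' => (P e').length - 1)]
    have hPn : (P e).length = n := rfl
    rw [hPn]
    have hlt1 : L'.length - 1 < n - 1 := by rw [hlen']; omega
    omega
  exact absurd (hmin ηv P' himm') (by omega)

/-- If a semi-complete digraph `T` contains a `p`-triple `(A,B,C)` with
`p > 4k`, and `η` is an immersion of a digraph `H` with `|H| = k` into `T` minimizing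
the total sum of lengths of its (simple) paths, then every path of the immersion uses at
most 2 arcs of the matching `{(c_i, a_i)}` between `C` and `A`. -/
theorem stmt_13 {V : Type*} [Fintype V] [DecidableEq V] (E : V → V → Prop)
    (hirr : ∀ v, ¬ E v v)
    (hsc : ∀ u v : V, u ≠ v → E u v ∨ E v u)
    (k p : ℕ) (hp : 4 * k < p)
    (a b c : Fin p → V)
    (hainj : Function.Injective a) (hbinj : Function.Injective b)
    (hcinj : Function.Injective c)
    (hAB : Disjoint (Set.range a) (Set.range b))
    (hBC : Disjoint (Set.range b) (Set.range c))
    (hAC : Disjoint (Set.range a) (Set.range c))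
    (hab : ∀ i j : Fin p, E (a i) (b j))
    (hbc : ∀ i j : Fin p, E (b i) (c j))
    (hca : ∀ i : Fin p, E (c i) (a i))
    {VH EH : Type*} [Fintype VH] [Fintype EH] (src tgt : EH → VH)
    (hk : Fintype.card VH + Fintype.card EH = k)
    (ηv : VH → V) (P : EH → List V)
    (himm : IsImmersion E src tgt ηv P)
    (hsimple : ∀ e, (P e).Nodup)
    (hmin : ∀ (ηv' : VH → V) (P' : EH → List V),
      IsImmersion E src tgt ηv' P' → totalLen P ≤ totalLen P') :
    ∀ e : EH,
      (Finset.univ.filter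
        (fun i : Fin p => (c i, a i) ∈ (P e).zip (P e).tail)).card ≤ 2 := by
  intro e
  by_contra hcon
  push_neg at hcon
  obtain ⟨i1, i2, i3, m1, m2, m3, hne12, hne13, hne23⟩ := Finset.two_lt_card_iff.1 hcon
  rw [Finset.mem_filter] at m1 m2 m3
  obtain ⟨t1, hc1, ha1⟩ := mem_arcs.1 m1.2
  obtain ⟨t2, hc2, ha2⟩ := mem_arcs.1 m2.2
  obtain ⟨t3, hc3, ha3⟩ := mem_arcs.1 m3.2
  have hac : ∀ i j : Fin p, a i ≠ c j := by
    intro i j hE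
    exact Set.disjoint_left.1 hAC ⟨i, rfl⟩ ⟨j, hE.symm⟩
  have d12 : t1 ≠ t2 := by
    intro hE; rw [hE] at hc1
    exact hne12 (hcinj (Option.some.inj (hc1.symm.trans hc2)))
  have d13 : t1 ≠ t3 := by
    intro hE; rw [hE] at hc1
    exact hne13 (hcinj (Option.some.inj (hc1.symm.trans hc3)))
  have d23 : t2 ≠ t3 := by
    intro hE; rw [hE] at hc2
    exact hne23 (hcinj (Option.some.inj (hc2.symm.trans hc3)))
  rcases lt_trichotomy t1 t2 with o12 | o | o21
  · rcases lt_trichotomy t2 t3 with o23 | o | o32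
    · exact shortcut E src tgt k p hp a b c hbinj hab hbc hac hk ηv P himm hsimple hmin
        e i1 i2 i3 t1 t2 t3 o12 o23 hc1 ha1 hc2 ha2 hc3 ha3
    · exact absurd o d23
    · rcases lt_trichotomy t1 t3 with o13 | o | o31
      · exact shortcut E src tgt k p hp a b c hbinj hab hbc hac hk ηv P himm hsimple hmin
          e i1 i3 i2 t1 t3 t2 o13 o32 hc1 ha1 hc3 ha3 hc2 ha2
      · exact absurd o d13
      · exact shortcut E src tgt k p hp a b c hbinj hab hbc hac hk ηv P himm hsimple hmin
          e i3 i1 i2 t3 t1 t2 o31 o12 hc3 ha3 hc1 ha1 hc2 ha2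
  · exact absurd o d12
  · rcases lt_trichotomy t2 t3 with o23 | o | o32
    · rcases lt_trichotomy t1 t3 with o13 | o | o31
      · exact shortcut E src tgt k p hp a b c hbinj hab hbc hac hk ηv P himm hsimple hmin
          e i2 i1 i3 t2 t1 t3 o21 o13 hc2 ha2 hc1 ha1 hc3 ha3
      · exact absurd o d13
      · exact shortcut E src tgt k p hp a b c hbinj hab hbc hac hk ηv P himm hsimple hmin
          e i2 i3 i1 t2 t3 t1 o23 o31 hc2 ha2 hc3 ha3 hc1 ha1
    · exact absurd o d23
    · exact shortcut E src tgt k p hp a b c hbinj hab hbc hac hk ηv P himm hsimple hmin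
        e i3 i2 i1 t3 t2 t1 o32 o21 hc3 ha3 hc2 ha2 hc1 ha1
end

section
/- Let T be a semi-complete digraph containing a p-triple (A,B,C) with p sufficiently large relative to k (e.g., p > 4k+1), and let η be an immersion of a digraph H with |H| = k into T minimizing the total sum of lengths of the paths η(E(H)), with all paths simple. Then every path of η(E(H)) uses at most 4 vertices from B. -/
lemma mem_zipTail_iff {V : Type*} (l : List V) (q : V × V) :
    q ∈ l.zip l.tail ↔ ∃ n, l[n]? = some q.1 ∧ l[n+1]? = some q.2 := by
  obtain ⟨u, w⟩ := q
  induction l with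
  | nil => simp
  | cons x t ih =>
    cases t with
    | nil => simp
    | cons y t' =>
      rw [List.tail_cons] at ih
      rw [List.tail_cons, List.zip_cons_cons, List.mem_cons, ih]
      constructor
      · rintro (h | ⟨n, h1, h2⟩)
        · obtain ⟨rfl, rfl⟩ := Prod.mk.injEq .. ▸ h
          exact ⟨0, by simp, by simp⟩
        · exact ⟨n + 1, by simpa using h1, by simpa using h2⟩
      · rintro ⟨n, h1, h2⟩
        cases n with
        | zero =>
          left
          simp only [Nat.zero_add, List.getElem?_cons_succ,
            List.getElem?_cons_zero, Option.some.injEq] at h1 h2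
          rw [h1, h2]
        | succ n =>
          right
          exact ⟨n, by simpa using h1, by simpa using h2⟩

lemma shortcut_mem {V : Type*} (Q : List V) (n1 n5 : ℕ) (x y : V)
    (h15 : n1 < n5) (h5 : n5 < Q.length) (q : V × V)
    (hq : q ∈ (Q.take (n1+1) ++ x :: y :: Q.drop n5).zip
      (Q.take (n1+1) ++ x :: y :: Q.drop n5).tail) :
    q ∈ Q.zip Q.tail ∨ q.1 = x ∨ q.2 = x ∨ q.1 = y := by
  have htl : (Q.take (n1+1)).length = n1 + 1 := by
    rw [List.length_take]; omega
  obtain ⟨n, h1, h2⟩ := (mem_zipTail_iff _ q).1 hq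
  rw [List.getElem?_append, htl] at h1 h2
  rcases Nat.lt_or_ge (n+1) (n1+1) with hA | hA
  · -- both in the take part
    rw [if_pos (by omega)] at h1
    rw [if_pos hA] at h2
    rw [List.getElem?_take, if_pos (by omega)] at h1
    rw [List.getElem?_take, if_pos hA] at h2
    exact Or.inl ((mem_zipTail_iff Q q).2 ⟨n, h1, h2⟩)
  · rcases Nat.lt_or_ge n (n1+1) with hB | hB
    · -- n = n1 : second component is x
      rw [if_neg (by omega)] at h2
      have : n + 1 - (n1 + 1) = 0 := by omega
      rw [this] at h2
      simp only [List.getElem?_cons_zero, Option.some.injEq] at h2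
      exact Or.inr (Or.inr (Or.inl h2.symm))
    · rw [if_neg (by omega)] at h1
      rw [if_neg (by omega)] at h2
      rcases Nat.lt_or_ge n (n1+3) with hC | hC
      · rcases Nat.lt_or_ge n (n1+2) with hD | hD
        · -- n = n1+1 : first component is x
          have : n - (n1 + 1) = 0 := by omega
          rw [this] at h1
          simp only [List.getElem?_cons_zero, Option.some.injEq] at h1
          exact Or.inr (Or.inl h1.symm)
        · -- n = n1+2 : first component is y
          have : n - (n1 + 1) = 1 := by omega
          rw [this] at h1
          simp only [List.getElem?_cons_succ, List.getElem?_cons_zero,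
            Option.some.injEq] at h1
          exact Or.inr (Or.inr (Or.inr h1.symm))
      · -- n ≥ n1+3 : both in the drop part
        obtain ⟨m, rfl⟩ : ∃ m, n = n1 + 3 + m := ⟨n - (n1+3), by omega⟩
        have e1 : n1 + 3 + m - (n1 + 1) = m + 2 := by omega
        have e2 : n1 + 3 + m + 1 - (n1 + 1) = m + 3 := by omega
        rw [e1] at h1
        rw [e2] at h2
        simp only [List.getElem?_cons_succ] at h1 h2
        rw [List.getElem?_drop] at h1 h2
        refine Or.inl ((mem_zipTail_iff Q q).2 ⟨n5 + m, h1, ?_⟩)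
        rw [show n5 + m + 1 = n5 + (m + 1) by omega]
        exact h2

lemma filter_mem_card_le {V : Type*} [DecidableEq V] {p : ℕ} {a c : Fin p → V}
    (hainj : Function.Injective a) (hcinj : Function.Injective c)
    (hAC : Disjoint (Set.range a) (Set.range c)) (L : List V) :
    (Finset.univ.filter (fun j : Fin p => c j ∈ L ∨ a j ∈ L)).card ≤ L.length := by
  have hac_ne : ∀ i j, a i ≠ c j := fun i j h =>
    Set.disjoint_left.mp hAC ⟨i, rfl⟩ ⟨j, h.symm⟩
  refine le_trans (Finset.card_le_card_of_injOn
      (fun j => if c j ∈ L then c j else a j) ?_ ?_) L.toFinset_card_le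
  · intro j hj
    rw [Finset.mem_coe, Finset.mem_filter] at hj
    rw [Finset.mem_coe, List.mem_toFinset]
    dsimp only
    split_ifs with h
    · exact h
    · exact hj.2.resolve_left h
  · intro j hj j' hj' hEq
    dsimp only at hEq
    split_ifs at hEq with h1 h2 h2
    · exact hcinj hEq
    · exact absurd hEq.symm (hac_ne _ _)
    · exact absurd hEq (hac_ne _ _)
    · exact hainj hEq

/-- If a semi-complete digraph `T` contains a `p`-triple `(A,B,C)` with
`p > 4k + 1`, and `η` is an immersion of a digraph `H` with `|H| = k` into `T`
minimizing the total sum of lengths of its (simple) paths, then every path of the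
immersion uses at most 4 vertices from `B`. -/
theorem stmt_14 {V : Type*} [Fintype V] [DecidableEq V] (E : V → V → Prop)
    (hirr : ∀ v, ¬ E v v)
    (hsc : ∀ u v : V, u ≠ v → E u v ∨ E v u)
    (k p : ℕ) (hp : 4 * k + 1 < p)
    (a b c : Fin p → V)
    (hainj : Function.Injective a) (hbinj : Function.Injective b)
    (hcinj : Function.Injective c)
    (hAB : Disjoint (Set.range a) (Set.range b))
    (hBC : Disjoint (Set.range b) (Set.range c))
    (hAC : Disjoint (Set.range a) (Set.range c))
    (hab : ∀ i j : Fin p, E (a i) (b j))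
    (hbc : ∀ i j : Fin p, E (b i) (c j))
    (hca : ∀ i : Fin p, E (c i) (a i))
    {VH EH : Type*} [Fintype VH] [Fintype EH] (src tgt : EH → VH)
    (hk : Fintype.card VH + Fintype.card EH = k)
    (ηv : VH → V) (P : EH → List V)
    (himm : IsImmersion E src tgt ηv P)
    (hsimple : ∀ e, (P e).Nodup)
    (hmin : ∀ (ηv' : VH → V) (P' : EH → List V),
      IsImmersion E src tgt ηv' P' → totalLen P ≤ totalLen P') :
    ∀ e : EH,
      (Finset.univ.filter (fun i : Fin p => b i ∈ P e)).card ≤ 4 := by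
  classical
  have hab_ne : ∀ i j, a i ≠ b j := fun i j h =>
    Set.disjoint_left.mp hAB ⟨i, rfl⟩ ⟨j, h.symm⟩
  have hbc_ne : ∀ i j, b i ≠ c j := fun i j h =>
    Set.disjoint_left.mp hBC ⟨i, rfl⟩ ⟨j, h.symm⟩
  have hac_ne : ∀ i j, a i ≠ c j := fun i j h =>
    Set.disjoint_left.mp hAC ⟨i, rfl⟩ ⟨j, h.symm⟩
  -- Step 1: a comparison immersion of total length `3 * |EH|`.
  obtain ⟨f⟩ : Nonempty (VH ↪ Fin p) := by
    apply Function.Embedding.nonempty_of_card_le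
    rw [Fintype.card_fin]; omega
  obtain ⟨g⟩ : Nonempty (EH ↪ Fin p) := by
    apply Function.Embedding.nonempty_of_card_le
    rw [Fintype.card_fin]; omega
  have himm₀ : IsImmersion E src tgt (fun v => b (f v))
      (fun e => [b (f (src e)), c (g e), a (g e), b (f (tgt e))]) := by
    refine ⟨hbinj.comp f.injective, fun e => ⟨?_, rfl, rfl⟩, ?_⟩
    · exact List.IsChain.cons_cons (hbc _ _) (List.IsChain.cons_cons (hca _)
        (List.IsChain.cons_cons (hab _ _) (List.isChain_singleton _)))
    · intro e e' hne q hq hq'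
      simp only [List.zip_cons_cons, List.tail_cons, List.zip_nil_right,
        List.mem_cons, List.not_mem_nil, or_false] at hq hq'
      rcases hq with rfl | rfl | rfl <;> rcases hq' with h | h | h <;>
        rw [Prod.mk.injEq] at h <;> obtain ⟨h1, h2⟩ := h <;>
        first
          | exact hne (g.injective (hcinj h2))
          | exact hne (g.injective (hcinj h1))
          | exact hne (g.injective (hainj h1))
          | exact hne (g.injective (hainj h2))
          | exact hbc_ne _ _ h1
          | exact hbc_ne _ _ h1.symm
          | exact hab_ne _ _ h1
          | exact hab_ne _ _ h1.symm
          | exact hac_ne _ _ h1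
          | exact hac_ne _ _ h1.symm
  have hbound : totalLen P ≤ 3 * Fintype.card EH := by
    have h := hmin _ _ himm₀
    calc totalLen P ≤ _ := h
      _ = 3 * Fintype.card EH := by
          simp [totalLen, Finset.card_univ, mul_comm]
  -- lengths are at least 1
  obtain ⟨hηinj, hpath, hdisj⟩ := himm
  have hlen1 : ∀ e', 1 ≤ (P e').length := by
    intro e'
    have h := (hpath e').2.1
    cases hPe : P e' with
    | nil => simp_all
    | cons z t => simp
  have hsumlen : ∑ e', (P e').length ≤ 4 * k := by
    have h1 : ∑ e', (P e').length = totalLen P + Fintype.card EH := by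
      calc ∑ e', (P e').length = ∑ e', (((P e').length - 1) + 1) :=
            Finset.sum_congr rfl fun e' _ => by have := hlen1 e'; omega
        _ = totalLen P + Fintype.card EH := by
            rw [Finset.sum_add_distrib, totalLen]
            simp [Finset.card_univ]
    omega
  -- Main argument
  intro e
  by_contra hcon
  push_neg at hcon
  set Q : List V := P e with hQdef
  obtain ⟨hchainQ, hheadQ, hlastQ⟩ := hpath e
  -- extract positions of 5 B-vertices on Q
  set S : Finset (Fin p) := Finset.univ.filter (fun i : Fin p => b i ∈ Q) with hSdef
  have hSmem : ∀ i ∈ S, b i ∈ Q := fun i hi => (Finset.mem_filter.1 hi).2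
  set N : Finset ℕ := S.image (fun i => Q.idxOf (b i)) with hNdef
  have hNS : N.card = S.card := by
    apply Finset.card_image_of_injOn
    intro i hi i' hi' h
    exact hbinj ((List.idxOf_inj (hSmem i hi)).1 h)
  have hN5 : 5 ≤ N.card := by omega
  have hNne : N.Nonempty := Finset.card_pos.1 (by omega)
  set n1 : ℕ := N.min' hNne with hn1def
  set n5 : ℕ := N.max' hNne with hn5def
  have hsub : N ⊆ Finset.Icc n1 n5 := fun x hx =>
    Finset.mem_Icc.2 ⟨N.min'_le x hx, N.le_max' x hx⟩
  have h15 : n1 + 4 ≤ n5 := by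
    have h' := Finset.card_le_card hsub
    rw [Nat.card_Icc] at h'
    omega
  obtain ⟨i1, hi1S, hi1⟩ := Finset.mem_image.1 (N.min'_mem hNne)
  obtain ⟨i5, hi5S, hi5⟩ := Finset.mem_image.1 (N.max'_mem hNne)
  rw [← hn1def] at hi1
  rw [← hn5def] at hi5
  have hn5lt : n5 < Q.length := by
    rw [← hi5]; exact List.idxOf_lt_length_iff.2 (hSmem i5 hi5S)
  have hQn1 : Q[n1]? = some (b i1) := by
    rw [← hi1]; exact List.getElem?_idxOf (hSmem i1 hi1S)
  have hQn5 : Q[n5]? = some (b i5) := by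
    rw [← hi5]; exact List.getElem?_idxOf (hSmem i5 hi5S)
  -- choose a good index j
  set bad : Finset (Fin p) := (Finset.univ.erase e).biUnion
    (fun e' => Finset.univ.filter (fun j : Fin p => c j ∈ P e' ∨ a j ∈ P e')) with hbaddef
  have hbadcard : bad.card ≤ ∑ e' ∈ Finset.univ.erase e, (P e').length :=
    le_trans Finset.card_biUnion_le
      (Finset.sum_le_sum fun e' _ => filter_mem_card_le hainj hcinj hAC (P e'))
  obtain ⟨j, hjgood⟩ : ∃ j : Fin p, j ∉ bad := by
    by_contra h
    push_neg at h
    have huniv : bad = Finset.univ := Finset.eq_univ_iff_forall.2 h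
    have hle : ∑ e' ∈ Finset.univ.erase e, (P e').length ≤ ∑ e', (P e').length :=
      Finset.sum_le_sum_of_subset (Finset.subset_univ _)
    have : bad.card = p := by rw [huniv, Finset.card_univ, Fintype.card_fin]
    omega
  have hjc : ∀ e', e' ≠ e → c j ∉ P e' ∧ a j ∉ P e' := by
    intro e' hne
    constructor <;> intro hmem <;>
      exact hjgood (Finset.mem_biUnion.2 ⟨e',
        Finset.mem_erase.2 ⟨hne, Finset.mem_univ _⟩,
        Finset.mem_filter.2 ⟨Finset.mem_univ _, by tauto⟩⟩)
  -- the shortcut path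
  set Q' : List V := Q.take (n1+1) ++ c j :: a j :: Q.drop n5 with hQ'def
  have htl : (Q.take (n1+1)).length = n1 + 1 := by
    rw [List.length_take]; omega
  have hQ'len : Q'.length = n1 + 3 + (Q.length - n5) := by
    rw [hQ'def, List.length_append, htl, List.length_cons, List.length_cons,
      List.length_drop]
    omega
  have htakene : Q.take (n1+1) ≠ [] := by
    intro h; rw [h] at htl; simp at htl
  have hdropne : Q.drop n5 ≠ [] := by
    intro h
    have := List.length_drop (i := n5) (l := Q)
    rw [h] at this
    simp at this
    omega
  have hQ'head : Q'.head? = Q.head? := by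
    rw [hQ'def, List.head?_append_of_ne_nil _ htakene]
    cases hQc : Q with
    | nil => rw [hQc] at hn5lt; simp at hn5lt
    | cons z t => simp [List.take_succ_cons]
  have hQ'last : Q'.getLast? = Q.getLast? := by
    rw [hQ'def, List.getLast?_append_of_ne_nil _ (by simp : c j :: a j :: Q.drop n5 ≠ []),
      show c j :: a j :: Q.drop n5 = [c j, a j] ++ Q.drop n5 from rfl,
      List.getLast?_append_of_ne_nil _ hdropne]
    conv_rhs => rw [← List.take_append_drop n5 Q]
    rw [List.getLast?_append_of_ne_nil _ hdropne]
  have hlast_take : (Q.take (n1+1)).getLast? = some (b i1) := by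
    rw [List.getLast?_eq_getElem?, htl, Nat.add_sub_cancel, List.getElem?_take,
      if_pos (Nat.lt_succ_self n1)]
    exact hQn1
  have hchainQ' : Q'.Chain' E := by
    rw [hQ'def]; show List.IsChain E _; rw [List.isChain_append]
    refine ⟨List.IsChain.take hchainQ _, ?_, ?_⟩
    · refine List.isChain_cons.2 ⟨?_, List.isChain_cons.2 ⟨?_, List.IsChain.drop hchainQ _⟩⟩
      · intro z hz
        simp only [List.head?_cons, Option.mem_def, Option.some.injEq] at hz
        rw [← hz]
        exact hca j
      · intro z hz
        rw [List.head?_drop, hQn5] at hz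
        simp only [Option.mem_def, Option.some.injEq] at hz
        rw [← hz]
        exact hab j i5
    · intro z hz w hw
      rw [hlast_take] at hz
      simp only [Option.mem_def, Option.some.injEq, List.head?_cons] at hz hw
      rw [← hz, ← hw]
      exact hbc i1 j
  set P' : EH → List V := Function.update P e Q' with hP'def
  have himm' : IsImmersion E src tgt ηv P' := by
    refine ⟨hηinj, ?_, ?_⟩
    · intro e''
      by_cases h : e'' = e
      · subst h
        rw [hP'def, Function.update_self]
        refine ⟨hchainQ', ?_, ?_⟩
        · rw [hQ'head]; exact hheadQ
        · rw [hQ'last]; exact hlastQ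
      · rw [hP'def, Function.update_of_ne h]
        exact hpath e''
    · intro e1 e2 hne q hq
      obtain ⟨u, w⟩ := q
      by_cases h1 : e1 = e
      · subst h1
        rw [hP'def, Function.update_self] at hq
        rw [hP'def, Function.update_of_ne (Ne.symm hne)]
        intro hq2
        rcases shortcut_mem Q n1 n5 (c j) (a j) (by omega) hn5lt (u, w) hq with
          hmem | h | h | h
        · exact hdisj e1 e2 hne (u, w) hmem hq2
        · exact (hjc e2 (Ne.symm hne)).1 (h ▸ (List.of_mem_zip hq2).1)
        · exact (hjc e2 (Ne.symm hne)).1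
            (h ▸ List.mem_of_mem_tail (List.of_mem_zip hq2).2)
        · exact (hjc e2 (Ne.symm hne)).2 (h ▸ (List.of_mem_zip hq2).1)
      · rw [hP'def, Function.update_of_ne h1] at hq
        by_cases h2 : e2 = e
        · subst h2
          rw [hP'def, Function.update_self]
          intro hq2
          rcases shortcut_mem Q n1 n5 (c j) (a j) (by omega) hn5lt (u, w) hq2 with
            hmem | h | h | h
          · exact hdisj e1 e2 hne (u, w) hq hmem
          · exact (hjc e1 h1).1 (h ▸ (List.of_mem_zip hq).1)
          · exact (hjc e1 h1).1 (h ▸ List.mem_of_mem_tail (List.of_mem_zip hq).2)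
          · exact (hjc e1 h1).2 (h ▸ (List.of_mem_zip hq).1)
        · rw [hP'def, Function.update_of_ne h2]
          exact hdisj e1 e2 hne (u, w) hq
  have hlt : totalLen P' < totalLen P := by
    have hfun : (fun e'' => ((P' e'').length - 1)) =
        Function.update (fun e'' => ((P e'').length - 1)) e (Q'.length - 1) := by
      funext e''
      by_cases h : e'' = e
      · subst h; rw [hP'def]; simp
      · rw [hP'def]; simp [Function.update_of_ne h]
    rw [totalLen, totalLen, hfun, Finset.sum_update_of_mem (Finset.mem_univ e),
      Finset.sum_eq_sum_sdiff_singleton_add (Finset.mem_univ e)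
        (fun e'' => ((P e'').length - 1))]
    have hQlen5 : n5 + 1 ≤ Q.length := hn5lt
    have hQQ : (P e).length = Q.length := rfl
    omega
  have := hmin ηv P' himm'
  omega
end

section
/- There exists a family F of subsets of a universe U of size n, of cardinality 2^{O(min(p,q)·log(p+q))}·log n, such that for all disjoint sets A, B ⊆ U with |A| ≤ p and |B| ≤ q, there exists R ∈ F with A ⊆ R and B ∩ R = ∅. -/
open Finset

lemma greedy_cover {β α : Type*} [Fintype β] [DecidableEq β] (cov : β → α → Prop)
    [∀ b a, Decidable (cov b a)] (m : ℕ) (hβ : 0 < Fintype.card β) :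
    ∀ (t : ℕ) (P : Finset α),
      (∀ a ∈ P, Fintype.card β ≤ m * (Finset.univ.filter (fun b => cov b a)).card) →
      (m - 1) ^ t * P.card < m ^ t →
      ∃ F : Finset β, F.card ≤ t ∧ ∀ a ∈ P, ∃ b ∈ F, cov b a := by
  intro t
  induction t with
  | zero =>
    intro P h hlt
    simp only [pow_zero, one_mul] at hlt
    refine ⟨∅, le_refl 0, fun a ha => absurd (card_pos.2 ⟨a, ha⟩) (by omega)⟩
  | succ t ih =>
    intro P h hlt
    rcases P.eq_empty_or_nonempty with rfl | hP
    · exact ⟨∅, by simp, by simp⟩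
    · have hm : 0 < m := by
        obtain ⟨a, ha⟩ := hP
        by_contra hm0
        have h2 := h a ha
        have hm0' : m = 0 := by omega
        subst hm0'
        simp at h2
        omega
      haveI : Nonempty β := Fintype.card_pos_iff.mp hβ
      -- double counting
      have hswap : ∑ b : β, (P.filter (fun a => cov b a)).card
          = ∑ a ∈ P, (Finset.univ.filter (fun b => cov b a)).card := by
        simp only [Finset.card_filter]
        exact Finset.sum_comm
      have h1 : P.card * Fintype.card β ≤ ∑ a ∈ P, m * (Finset.univ.filter (fun b => cov b a)).card := by
        calc P.card * Fintype.card β = ∑ _a ∈ P, Fintype.card β := by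
              rw [Finset.sum_const, smul_eq_mul]
          _ ≤ _ := Finset.sum_le_sum h
      have hsum : ∑ b : β, P.card ≤ ∑ b : β, m * (P.filter (fun a => cov b a)).card := by
        calc ∑ _b : β, P.card = Fintype.card β * P.card := by
              rw [Finset.sum_const, Finset.card_univ, smul_eq_mul]
          _ = P.card * Fintype.card β := mul_comm _ _
          _ ≤ ∑ a ∈ P, m * (Finset.univ.filter (fun b => cov b a)).card := h1
          _ = m * ∑ a ∈ P, (Finset.univ.filter (fun b => cov b a)).card := (Finset.mul_sum _ _ _).symm
          _ = m * ∑ b : β, (P.filter (fun a => cov b a)).card := by rw [hswap]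
          _ = ∑ b : β, m * (P.filter (fun a => cov b a)).card := Finset.mul_sum _ _ _
      obtain ⟨b, -, hb⟩ := Finset.exists_le_of_sum_le Finset.univ_nonempty hsum
      set y := (P.filter (fun a => cov b a)).card with hy
      set P' := P.filter (fun a => ¬ cov b a) with hP'
      have hsplit : y + P'.card = P.card :=
        Finset.card_filter_add_card_filter_not _
      have hP'lt : (m - 1) ^ t * P'.card < m ^ t := by
        have key : m * P'.card ≤ (m - 1) * P.card := by
          have : m * P'.card + P.card ≤ m * P.card := by nlinarith [hb]
          have hrw : (m - 1) * P.card = m * P.card - P.card := by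
            cases m with
            | zero => omega
            | succ m => simp [Nat.succ_mul]
          omega
        have h3 : m * ((m - 1) ^ t * P'.card) ≤ (m - 1) ^ (t + 1) * P.card := by
          calc m * ((m - 1) ^ t * P'.card) = (m - 1) ^ t * (m * P'.card) := by ring
            _ ≤ (m - 1) ^ t * ((m - 1) * P.card) := Nat.mul_le_mul_left _ key
            _ = (m - 1) ^ (t + 1) * P.card := by ring
        have h4 : m * ((m - 1) ^ t * P'.card) < m * m ^ t := by
          calc m * ((m - 1) ^ t * P'.card) ≤ (m - 1) ^ (t + 1) * P.card := h3
            _ < m ^ (t + 1) := hlt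
            _ = m * m ^ t := by ring
        exact Nat.lt_of_mul_lt_mul_left h4
      obtain ⟨F', hF'card, hF'cov⟩ := ih P' (fun a ha => h a (Finset.filter_subset _ _ ha)) hP'lt
      refine ⟨insert b F', (Finset.card_insert_le _ _).trans (by omega), fun a ha => ?_⟩
      by_cases hc : cov b a
      · exact ⟨b, Finset.mem_insert_self _ _, hc⟩
      · obtain ⟨b', hb', hc'⟩ := hF'cov a (Finset.mem_filter.2 ⟨ha, hc⟩)
        exact ⟨b', Finset.mem_insert_of_mem hb', hc'⟩

private def trm (p q i : ℕ) : ℕ := (p + q).choose i * (p ^ i * q ^ ((p + q) - i))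

lemma trm_step_up {p q i : ℕ} (hp : 0 < p) (hq : 0 < q) (hi : i < p) :
    trm p q i ≤ trm p q (i + 1) := by
  set k := p + q with hk
  have hik : i < k := by omega
  obtain ⟨d, hd1, hd2⟩ : ∃ d, k - i = d + 1 ∧ k - (i + 1) = d := ⟨k - i - 1, by omega⟩
  have key : k.choose i * q ≤ k.choose (i + 1) * p := by
    have hmul : k.choose (i + 1) * p * (i + 1) = k.choose i * (k - i) * p := by
      rw [mul_right_comm, Nat.choose_succ_right_eq]
    refine Nat.le_of_mul_le_mul_right ?_ (Nat.succ_pos i)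
    rw [hmul]
    have h1 : q * (i + 1) ≤ (k - i) * p := by
      calc q * (i + 1) ≤ q * p := Nat.mul_le_mul_left _ hi
        _ ≤ (q + 1) * p := Nat.mul_le_mul_right _ (Nat.le_succ q)
        _ ≤ (k - i) * p := Nat.mul_le_mul_right _ (by omega)
    calc k.choose i * q * (i + 1) = k.choose i * (q * (i + 1)) := by ring
      _ ≤ k.choose i * ((k - i) * p) := Nat.mul_le_mul_left _ h1
      _ = k.choose i * (k - i) * p := by ring
  unfold trm
  rw [← hk, hd1, hd2]
  calc k.choose i * (p ^ i * q ^ (d + 1)) = (k.choose i * q) * (p ^ i * q ^ d) := by ring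
    _ ≤ (k.choose (i + 1) * p) * (p ^ i * q ^ d) := Nat.mul_le_mul_right _ key
    _ = k.choose (i + 1) * (p ^ (i + 1) * q ^ d) := by ring

lemma trm_step_down {p q i : ℕ} (hp : 0 < p) (hq : 0 < q) (hpi : p ≤ i) (hik : i < p + q) :
    trm p q (i + 1) ≤ trm p q i := by
  set k := p + q with hk
  obtain ⟨d, hd1, hd2⟩ : ∃ d, k - i = d + 1 ∧ k - (i + 1) = d := ⟨k - i - 1, by omega⟩
  have key : k.choose (i + 1) * p ≤ k.choose i * q := by
    have hmul : k.choose (i + 1) * p * (i + 1) = k.choose i * (k - i) * p := by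
      rw [mul_right_comm, Nat.choose_succ_right_eq]
    refine Nat.le_of_mul_le_mul_right ?_ (Nat.succ_pos i)
    rw [hmul]
    have h1 : (k - i) * p ≤ q * (i + 1) := by
      calc (k - i) * p ≤ q * p := Nat.mul_le_mul_right _ (by omega)
        _ ≤ q * (i + 1) := Nat.mul_le_mul_left _ (by omega)
    calc k.choose i * (k - i) * p = k.choose i * ((k - i) * p) := by ring
      _ ≤ k.choose i * (q * (i + 1)) := Nat.mul_le_mul_left _ h1
      _ = k.choose i * q * (i + 1) := by ring
  unfold trm
  rw [← hk, hd1, hd2]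
  calc k.choose (i + 1) * (p ^ (i + 1) * q ^ d) = (k.choose (i + 1) * p) * (p ^ i * q ^ d) := by ring
    _ ≤ (k.choose i * q) * (p ^ i * q ^ d) := Nat.mul_le_mul_right _ key
    _ = k.choose i * (p ^ i * q ^ (d + 1)) := by ring

lemma trm_le_mode {p q : ℕ} (hp : 0 < p) (hq : 0 < q) :
    ∀ i ≤ p + q, trm p q i ≤ trm p q p := by
  have up : ∀ j, ∀ i, i + j = p → trm p q i ≤ trm p q p := by
    intro j
    induction j with
    | zero => intro i hi; simp only [Nat.add_zero] at hi; subst hi; exact le_refl _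
    | succ j ihj =>
      intro i hi
      exact (trm_step_up hp hq (by omega)).trans (ihj (i + 1) (by omega))
  have down : ∀ j, p + j ≤ p + q → trm p q (p + j) ≤ trm p q p := by
    intro j
    induction j with
    | zero => intro _; exact le_refl _
    | succ j ihj =>
      intro hj
      have : p + (j + 1) = (p + j) + 1 := by omega
      rw [this]
      exact (trm_step_down hp hq (by omega) (by omega)).trans (ihj (by omega))
  intro i hi
  rcases le_or_gt i p with h | h
  · exact up (p - i) i (by omega)
  · have : i = p + (i - p) := by omega
    rw [this]
    exact down (i - p) (by omega)

lemma mode_bound {p q : ℕ} (hp : 0 < p) (hq : 0 < q) :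
    (p + q) ^ (p + q) ≤ (p + q + 1) * ((p + q).choose p * (p ^ p * q ^ q)) := by
  have hbin := add_pow p q (p + q)
  have hterm : ∀ i ∈ Finset.range (p + q + 1),
      p ^ i * q ^ ((p + q) - i) * (p + q).choose i
        ≤ (p + q).choose p * (p ^ p * q ^ ((p + q) - p)) := by
    intro i hi
    have := trm_le_mode hp hq i (by simpa using Finset.mem_range.mp hi |> Nat.lt_succ_iff.mp)
    unfold trm at this
    calc p ^ i * q ^ ((p + q) - i) * (p + q).choose i
        = (p + q).choose i * (p ^ i * q ^ ((p + q) - i)) := by ring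
      _ ≤ _ := this
  have hsub : (p + q) - p = q := by omega
  calc (p + q) ^ (p + q)
      = ∑ i ∈ Finset.range (p + q + 1), p ^ i * q ^ ((p + q) - i) * (p + q).choose i := hbin
    _ ≤ (Finset.range (p + q + 1)).card • ((p + q).choose p * (p ^ p * q ^ ((p + q) - p))) :=
        Finset.sum_le_card_nsmul _ _ _ hterm
    _ = (p + q + 1) * ((p + q).choose p * (p ^ p * q ^ q)) := by
        rw [Finset.card_range, smul_eq_mul, hsub]

lemma two_mul_pred_pow (m : ℕ) (hm : 0 < m) : 2 * (m - 1) ^ m ≤ m ^ m := by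
  obtain ⟨e, rfl⟩ : ∃ e, m = e + 1 := ⟨m - 1, by omega⟩
  simp only [Nat.add_sub_cancel]
  have B : ∀ j : ℕ, e ^ j * (e + j) ≤ (e + 1) ^ j * e := by
    intro j
    induction j with
    | zero => simp
    | succ j ihj =>
      calc e ^ (j + 1) * (e + (j + 1)) = e * (e ^ j * (e + j)) + e ^ (j + 1) := by ring
        _ ≤ e * ((e + 1) ^ j * e) + e * (e + 1) ^ j := by
            refine Nat.add_le_add (Nat.mul_le_mul_left _ ihj) ?_
            calc e ^ (j + 1) = e * e ^ j := by ring
              _ ≤ e * (e + 1) ^ j := Nat.mul_le_mul_left _ (Nat.pow_le_pow_left (by omega) _)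
        _ = (e + 1) ^ (j + 1) * e := by ring
  calc 2 * e ^ (e + 1) = e ^ e * (e + e) := by ring
    _ ≤ (e + 1) ^ e * e := B e
    _ ≤ (e + 1) ^ e * (e + 1) := Nat.mul_le_mul_left _ (by omega)
    _ = (e + 1) ^ (e + 1) := by ring

lemma count_small (n p : ℕ) :
    ((Finset.univ : Finset (Finset (Fin n))).filter (fun A => A.card ≤ p)).card ≤ (n + 1) ^ p := by
  classical
  have hsub : ((Finset.univ : Finset (Finset (Fin n))).filter (fun A => A.card ≤ p))
      ⊆ (Finset.range (p + 1)).biUnion (fun i => Finset.powersetCard i Finset.univ) := by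
    intro A hA
    simp only [Finset.mem_filter] at hA
    refine Finset.mem_biUnion.2 ⟨A.card, Finset.mem_range.2 (by omega), ?_⟩
    exact Finset.mem_powersetCard.2 ⟨Finset.subset_univ _, rfl⟩
  calc ((Finset.univ : Finset (Finset (Fin n))).filter (fun A => A.card ≤ p)).card
      ≤ ((Finset.range (p + 1)).biUnion (fun i => Finset.powersetCard i Finset.univ)).card :=
        Finset.card_le_card hsub
    _ ≤ ∑ i ∈ Finset.range (p + 1), (Finset.powersetCard i (Finset.univ : Finset (Fin n))).card :=
        Finset.card_biUnion_le
    _ = ∑ i ∈ Finset.range (p + 1), n.choose i := by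
        simp [Finset.card_powersetCard]
    _ ≤ ∑ i ∈ Finset.range (p + 1), n ^ i * 1 ^ (p - i) * p.choose i := by
        refine Finset.sum_le_sum fun i hi => ?_
        have h1 : n.choose i ≤ n ^ i := Nat.choose_le_pow n i
        have h2 : 0 < p.choose i := Nat.choose_pos (Nat.lt_succ_iff.mp (Finset.mem_range.mp hi))
        calc n.choose i ≤ n ^ i := h1
          _ = n ^ i * 1 ^ (p - i) * 1 := by ring
          _ ≤ n ^ i * 1 ^ (p - i) * p.choose i := Nat.mul_le_mul_left _ h2
    _ = (n + 1) ^ p := (add_pow n 1 p).symm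



/-- There exists a family `F` of subsets of a universe of size `n`, of
cardinality `2^{O(min(p,q)·log(p+q))}·log n`, such that for all disjoint `A, B` with
`|A| ≤ p`, `|B| ≤ q`, some `R ∈ F` satisfies `A ⊆ R` and `B ∩ R = ∅`. The `O(·)` is
expressed by a universal constant `C`. -/
theorem stmt_16 :
    ∃ C : ℕ, ∀ n p q : ℕ, ∃ F : Finset (Finset (Fin n)),
      F.card ≤ 2 ^ (C * (min p q + 1) * (Nat.log 2 (p + q) + 1)) * (Nat.log 2 n + 1) ∧
      ∀ A B : Finset (Fin n), Disjoint A B → A.card ≤ p → B.card ≤ q →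
        ∃ R ∈ F, A ⊆ R ∧ B ∩ R = ∅ := by
  classical
  refine ⟨5, fun n p q => ?_⟩
  have hpos : 0 < 2 ^ (5 * (min p q + 1) * (Nat.log 2 (p + q) + 1)) * (Nat.log 2 n + 1) := by
    positivity
  rcases Nat.eq_zero_or_pos p with rfl | hp
  · refine ⟨{∅}, by rw [Finset.card_singleton]; omega, fun A B hd hA hB => ?_⟩
    have : A = ∅ := Finset.card_eq_zero.mp (by omega)
    exact ⟨∅, Finset.mem_singleton_self _, by simp [this]⟩
  rcases Nat.eq_zero_or_pos q with rfl | hq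
  · refine ⟨{Finset.univ}, by rw [Finset.card_singleton]; omega, fun A B hd hA hB => ?_⟩
    have : B = ∅ := Finset.card_eq_zero.mp (by omega)
    exact ⟨Finset.univ, Finset.mem_singleton_self _, Finset.subset_univ _, by simp [this]⟩
  -- main case
  set k := p + q with hk
  have hkpos : 0 < k := by omega
  set m := (k + 1) * k.choose p with hm
  have hmpos : 0 < m := Nat.mul_pos (by omega) (Nat.choose_pos (by omega))
  set Rg : (Fin n → Fin k) → Finset (Fin n) :=
    fun g => Finset.univ.filter (fun x => (g x : ℕ) < p) with hRg
  set cov : (Fin n → Fin k) → (Finset (Fin n) × Finset (Fin n)) → Prop :=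
    fun g AB => AB.1 ⊆ Rg g ∧ AB.2 ∩ Rg g = ∅ with hcovdef
  set P : Finset (Finset (Fin n) × Finset (Fin n)) :=
    Finset.univ.filter (fun AB => Disjoint AB.1 AB.2 ∧ AB.1.card ≤ p ∧ AB.2.card ≤ q) with hPdef
  have hcardβ : Fintype.card (Fin n → Fin k) = k ^ n := by
    simp [Fintype.card_fun]
  have hβ : 0 < Fintype.card (Fin n → Fin k) := by
    rw [hcardβ]; exact pow_pos hkpos _
  -- cardinality of the two fibers in Fin k
  have hpk : p < k := by omega
  have hSp : ((Finset.univ : Finset (Fin k)).filter (fun j : Fin k => (j : ℕ) < p)).card = p := by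
    have heq : ((Finset.univ : Finset (Fin k)).filter (fun j : Fin k => (j : ℕ) < p))
        = Finset.Iio (⟨p, hpk⟩ : Fin k) := by
      ext j
      simp [Fin.lt_def]
    rw [heq, Fin.card_Iio]
  have hSq : ((Finset.univ : Finset (Fin k)).filter (fun j : Fin k => p ≤ (j : ℕ))).card = q := by
    have h2 : ((Finset.univ : Finset (Fin k)).filter (fun j : Fin k => ¬ (j : ℕ) < p)).card = q := by
      have := Finset.card_filter_add_card_filter_not
        (s := (Finset.univ : Finset (Fin k))) (p := fun j : Fin k => (j : ℕ) < p)
      rw [hSp, Finset.card_univ, Fintype.card_fin] at this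
      omega
    rw [← h2]
    congr 1
    ext j
    simp [Nat.not_lt]
  -- coverage counting
  have hcov : ∀ AB ∈ P, Fintype.card (Fin n → Fin k)
      ≤ m * (Finset.univ.filter (fun g => cov g AB)).card := by
    rintro ⟨A, B⟩ hAB
    simp only [hPdef, Finset.mem_filter, Finset.mem_univ, true_and] at hAB
    obtain ⟨hd, hA, hB⟩ := hAB
    set a := A.card with ha
    set b := B.card with hb
    set T : Fin n → Finset (Fin k) := fun x =>
      if x ∈ A then (Finset.univ : Finset (Fin k)).filter (fun j : Fin k => (j : ℕ) < p)
      else if x ∈ B then (Finset.univ : Finset (Fin k)).filter (fun j : Fin k => p ≤ (j : ℕ))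
      else Finset.univ with hT
    have hfe : Finset.univ.filter (fun g => cov g (A, B)) = Fintype.piFinset T := by
      ext g
      simp only [Finset.mem_filter, Finset.mem_univ, true_and, Fintype.mem_piFinset, hcovdef]
      constructor
      · rintro ⟨h1, h2⟩ x
        by_cases hxA : x ∈ A
        · have := h1 hxA
          simp only [hRg, Finset.mem_filter] at this
          simp [hT, hxA, this.2]
        · by_cases hxB : x ∈ B
          · have hxR : x ∉ Rg g := by
              intro hc
              exact Finset.eq_empty_iff_forall_notMem.mp h2 x (Finset.mem_inter.2 ⟨hxB, hc⟩)
            simp only [hRg, Finset.mem_filter, Finset.mem_univ, true_and] at hxR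
            simp only [hT, if_neg hxA, if_pos hxB, Finset.mem_filter, Finset.mem_univ, true_and]
            omega
          · simp [hT, hxA, hxB]
      · intro hg
        constructor
        · intro x hxA
          have := hg x
          simp only [hT, if_pos hxA, Finset.mem_filter, Finset.mem_univ, true_and] at this
          simp [hRg, Finset.mem_filter, this]
        · rw [Finset.eq_empty_iff_forall_notMem]
          intro x hx
          obtain ⟨hxB, hxR⟩ := Finset.mem_inter.mp hx
          have hxA : x ∉ A := fun hc => (Finset.disjoint_left.mp hd hc) hxB
          have := hg x
          simp only [hT, if_neg hxA, if_pos hxB, Finset.mem_filter, Finset.mem_univ,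
            true_and] at this
          simp only [hRg, Finset.mem_filter, Finset.mem_univ, true_and] at hxR
          omega
    have hcount : (Finset.univ.filter (fun g => cov g (A, B))).card
        = p ^ a * q ^ b * k ^ (n - (a + b)) := by
      rw [hfe, Fintype.card_piFinset]
      have hBsub : B ⊆ (A ∪ B) := Finset.subset_union_right
      have hprodA : ∏ x ∈ A, (T x).card = p ^ a := by
        rw [Finset.prod_congr rfl (fun x hx => ?_), Finset.prod_const]
        rw [hT]
        simp only [if_pos hx]
        exact hSp
      have hprodB : ∏ x ∈ B, (T x).card = q ^ b := by
        rw [Finset.prod_congr rfl (fun x hx => ?_), Finset.prod_const]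
        have hxA : x ∉ A := fun hc => (Finset.disjoint_left.mp hd hc) hx
        rw [hT]
        simp only [if_neg hxA, if_pos hx]
        exact hSq
      have hprodC : ∏ x ∈ (A ∪ B)ᶜ, (T x).card = k ^ (n - (a + b)) := by
        rw [Finset.prod_congr rfl (fun x hx => ?_), Finset.prod_const]
        · congr 1
          rw [Finset.card_compl, Finset.card_union_of_disjoint hd, Fintype.card_fin]
        · simp only [Finset.mem_compl, Finset.mem_union, not_or] at hx
          simp [hT, hx.1, hx.2, Fintype.card_fin]
      calc ∏ x, (T x).card
          = (∏ x ∈ (A ∪ B), (T x).card) * ∏ x ∈ (A ∪ B)ᶜ, (T x).card :=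
            (Finset.prod_mul_prod_compl _ _).symm
        _ = ((∏ x ∈ A, (T x).card) * ∏ x ∈ B, (T x).card) * ∏ x ∈ (A ∪ B)ᶜ, (T x).card := by
            rw [Finset.prod_union hd]
        _ = p ^ a * q ^ b * k ^ (n - (a + b)) := by rw [hprodA, hprodB, hprodC]
    rw [hcardβ, hcount]
    have hab : a + b ≤ n := by
      have := Finset.card_le_univ (A ∪ B)
      rw [Finset.card_union_of_disjoint hd, Fintype.card_fin] at this
      omega
    have hmode : k ^ k ≤ m * (p ^ p * q ^ q) := by
      rw [hm, mul_assoc]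
      exact mode_bound hp hq
    have hkey : k ^ (a + b) ≤ m * (p ^ a * q ^ b) := by
      have hcpos : 0 < p ^ (p - a) * q ^ (q - b) :=
        Nat.mul_pos (pow_pos hp _) (pow_pos hq _)
      refine Nat.le_of_mul_le_mul_right ?_ hcpos
      have e1 : p ^ p = p ^ a * p ^ (p - a) := by rw [← pow_add]; congr 1; omega
      have e2 : q ^ q = q ^ b * q ^ (q - b) := by rw [← pow_add]; congr 1; omega
      calc k ^ (a + b) * (p ^ (p - a) * q ^ (q - b))
          ≤ k ^ (a + b) * (k ^ (p - a) * k ^ (q - b)) := by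
            refine Nat.mul_le_mul_left _ (Nat.mul_le_mul ?_ ?_) <;>
              exact Nat.pow_le_pow_left (by omega) _
        _ = k ^ k := by rw [← pow_add, ← pow_add]; congr 1; omega
        _ ≤ m * (p ^ p * q ^ q) := hmode
        _ = m * (p ^ a * q ^ b) * (p ^ (p - a) * q ^ (q - b)) := by rw [e1, e2]; ring
    calc k ^ n = k ^ (a + b) * k ^ (n - (a + b)) := by rw [← pow_add]; congr 1; omega
      _ ≤ m * (p ^ a * q ^ b) * k ^ (n - (a + b)) := Nat.mul_le_mul_right _ hkey
      _ = m * (p ^ a * q ^ b * k ^ (n - (a + b))) := by ring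
  -- size of P
  set L := Nat.log 2 n + 1 with hL
  have hPcard : P.card ≤ (n + 1) ^ k := by
    have hsub : P ⊆ (Finset.univ.filter (fun A : Finset (Fin n) => A.card ≤ p)) ×ˢ
        (Finset.univ.filter (fun B : Finset (Fin n) => B.card ≤ q)) := by
      rintro ⟨A, B⟩ hAB
      simp only [hPdef, Finset.mem_filter, Finset.mem_univ, true_and] at hAB
      simp [Finset.mem_product, hAB.2.1, hAB.2.2]
    calc P.card ≤ _ := Finset.card_le_card hsub
      _ = (Finset.univ.filter (fun A : Finset (Fin n) => A.card ≤ p)).card *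
          (Finset.univ.filter (fun B : Finset (Fin n) => B.card ≤ q)).card :=
            Finset.card_product _ _
      _ ≤ (n + 1) ^ p * (n + 1) ^ q := Nat.mul_le_mul (count_small n p) (count_small n q)
      _ = (n + 1) ^ k := by rw [← pow_add]
  set s := Nat.log 2 P.card + 1 with hs
  set t := m * s with ht
  have hcond : (m - 1) ^ t * P.card < m ^ t := by
    have hN : P.card < 2 ^ s := Nat.lt_pow_succ_log_self (by norm_num) _
    have h2m : (2 * (m - 1) ^ m) ^ s ≤ (m ^ m) ^ s :=
      Nat.pow_le_pow_left (two_mul_pred_pow m hmpos) s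
    have hmt : m ^ t = (m ^ m) ^ s := by rw [ht, pow_mul]
    have hm1t : (m - 1) ^ t = ((m - 1) ^ m) ^ s := by rw [ht, pow_mul]
    rw [hmt, hm1t]
    rcases Nat.eq_zero_or_pos ((m - 1) ^ m) with hz | hpos2
    · rw [hz]
      have : (0 : ℕ) ^ s = 0 := by
        apply Nat.zero_pow; omega
      rw [this, Nat.zero_mul]
      exact pow_pos (pow_pos hmpos _) _
    · calc ((m - 1) ^ m) ^ s * P.card < ((m - 1) ^ m) ^ s * 2 ^ s :=
            (Nat.mul_lt_mul_left (pow_pos hpos2 _)).mpr hN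
        _ = (2 * (m - 1) ^ m) ^ s := by rw [mul_pow]; ring
        _ ≤ (m ^ m) ^ s := h2m
  obtain ⟨F', hF'card, hF'cov⟩ := greedy_cover cov m hβ t P hcov hcond
  refine ⟨F'.image Rg, ?_, ?_⟩
  · -- cardinality bound
    set μ := min p q with hμ
    set Lq := Nat.log 2 k with hLq
    have hchoose : k.choose p ≤ k ^ μ := by
      rcases le_total p q with h | h
      · rw [hμ, min_eq_left h]; exact Nat.choose_le_pow _ _
      · rw [hμ, min_eq_right h]
        have : k.choose p = k.choose q := by
          have := Nat.choose_symm (n := k) (k := p) (by omega)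
          rw [show k - p = q by omega] at this
          exact this.symm
        rw [this]; exact Nat.choose_le_pow _ _
    have hk2 : k + 1 ≤ 2 ^ (Lq + 1) := Nat.lt_pow_succ_log_self (by norm_num) k
    have hmle : m ≤ 2 ^ ((Lq + 1) * (μ + 1)) := by
      calc m = (k + 1) * k.choose p := hm
        _ ≤ 2 ^ (Lq + 1) * k ^ μ := Nat.mul_le_mul hk2 hchoose
        _ ≤ 2 ^ (Lq + 1) * (2 ^ (Lq + 1)) ^ μ :=
            Nat.mul_le_mul_left _ (Nat.pow_le_pow_left (by omega) _)
        _ = 2 ^ ((Lq + 1) * (μ + 1)) := by rw [← pow_mul, ← pow_add]; congr 1; ring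
    have hsle : s ≤ L * 2 ^ (Lq + 1) := by
      have hn1 : n + 1 ≤ 2 ^ L := Nat.lt_pow_succ_log_self (by norm_num) n
      have hNle : P.card ≤ 2 ^ (L * k) :=
        hPcard.trans (by rw [pow_mul]; exact Nat.pow_le_pow_left hn1 k)
      have hlogN : Nat.log 2 P.card ≤ L * k := by
        calc Nat.log 2 P.card ≤ Nat.log 2 (2 ^ (L * k)) := Nat.log_mono_right hNle
          _ = L * k := Nat.log_pow (by norm_num) _
      have hL1 : 1 ≤ L := by rw [hL]; omega
      calc s = Nat.log 2 P.card + 1 := hs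
        _ ≤ L * k + 1 := by omega
        _ ≤ L * k + L := by omega
        _ = L * (k + 1) := by ring
        _ ≤ L * 2 ^ (Lq + 1) := Nat.mul_le_mul_left _ hk2
    calc (F'.image Rg).card ≤ F'.card := Finset.card_image_le
      _ ≤ t := hF'card
      _ = m * s := ht
      _ ≤ 2 ^ ((Lq + 1) * (μ + 1)) * (L * 2 ^ (Lq + 1)) := Nat.mul_le_mul hmle hsle
      _ = 2 ^ ((Lq + 1) * (μ + 2)) * L := by
          rw [show (Lq + 1) * (μ + 2) = (Lq + 1) * (μ + 1) + (Lq + 1) by ring, pow_add]; ring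
      _ ≤ 2 ^ (5 * (μ + 1) * (Lq + 1)) * L :=
          Nat.mul_le_mul_right _ (Nat.pow_le_pow_right (by norm_num) (by nlinarith))
  · intro A B hd hA hB
    have hmem : (A, B) ∈ P := by
      simp [hPdef, hd, hA, hB]
    obtain ⟨g, hg, hcg⟩ := hF'cov (A, B) hmem
    exact ⟨Rg g, Finset.mem_image_of_mem _ hg, hcg.1, hcg.2⟩
end

section
/- For the semi-complete digraph T_n on 2n vertices a_1,…,a_n, b_1,…,b_n defined below, there is exactly one pair of vertex-disjoint paths (P_1, P_2) with P_1 from a_1 to a_n and P_2 from b_n to b_1, namely P_1 = (a_1, a_2, …, a_n) and P_2 = (b_n, b_{n−1}, …, b_1); moreover these two paths together use every vertex of T_n. -/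
/-- The arc relation of the semi-complete digraph `T_n`: vertices `a_i = Sum.inl i`,
`b_i = Sum.inr i` (0-based indices), with arcs `(a_i, a_{i+1})`; `(a_j, a_i)` for
`i + 1 < j`; `(b_{i+1}, b_i)`; `(b_j, b_i)` for `i > j + 1`; `(a_i, b_i)`; and
`(b_j, a_i)` for `i ≠ j`. -/
def TnE (n : ℕ) : (Fin n ⊕ Fin n) → (Fin n ⊕ Fin n) → Prop
  | Sum.inl x, Sum.inl y => (y : ℕ) = (x : ℕ) + 1 ∨ (y : ℕ) + 1 < (x : ℕ)
  | Sum.inr x, Sum.inr y => (x : ℕ) = (y : ℕ) + 1 ∨ (x : ℕ) + 1 < (y : ℕ)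
  | Sum.inl x, Sum.inr y => x = y
  | Sum.inr x, Sum.inl y => x ≠ y

/-- `l` is a (simple) directed path from `u` to `v` in the digraph `E`. -/
def IsPathFrom {V : Type*} (E : V → V → Prop) (u v : V) (l : List V) : Prop :=
  l.Chain' E ∧ l.Nodup ∧ l.head? = some u ∧ l.getLast? = some v

namespace Stmt17Aux

/-- The arc relation of the infinite analogue of `T_n`, on `ℕ ⊕ ℕ`. -/
def NE : (ℕ ⊕ ℕ) → (ℕ ⊕ ℕ) → Prop
  | Sum.inl x, Sum.inl y => y = x + 1 ∨ y + 1 < x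
  | Sum.inr x, Sum.inr y => x = y + 1 ∨ x + 1 < y
  | Sum.inl x, Sum.inr y => x = y
  | Sum.inr x, Sum.inl y => x ≠ y

def idx : ℕ ⊕ ℕ → ℕ := Sum.elim id id

lemma mem_of_head? {α : Type*} {l : List α} {a : α} (h : l.head? = some a) : a ∈ l := by
  cases l with
  | nil => simp at h
  | cons x t => simp at h; subst h; exact List.mem_cons_self

lemma mem_of_getLast? {α : Type*} {l : List α} {a : α} (h : l.getLast? = some a) : a ∈ l := by
  rcases l.eq_nil_or_concat with rfl | ⟨l', b, rfl⟩
  · simp at h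
  · simp [List.getLast?_concat] at h; subst h; simp

lemma path_singleton {α : Type*} {l : List α} {u : α} (hn : l.Nodup)
    (hh : l.head? = some u) (hg : l.getLast? = some u) : l = [u] := by
  cases l with
  | nil => simp at hh
  | cons x t =>
    have hx : x = u := by simpa using hh
    subst hx
    cases t with
    | nil => rfl
    | cons y s =>
      exfalso
      have h1 : (y :: s).getLast? = some x := by
        rw [← hg, List.getLast?_cons_cons]
      have h2 : x ∈ y :: s := mem_of_getLast? h1
      rw [List.nodup_cons] at hn
      exact hn.1 h2

lemma aux : ∀ (d lo : ℕ) (Q₁ Q₂ : List (ℕ ⊕ ℕ)),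
    Q₁.Chain' NE → Q₁.Nodup → Q₁.head? = some (.inl lo) →
      Q₁.getLast? = some (.inl (lo + d)) →
    Q₂.Chain' NE → Q₂.Nodup → Q₂.head? = some (.inr (lo + d)) →
      Q₂.getLast? = some (.inr lo) →
    (∀ x ∈ Q₁, x ∉ Q₂) → (∀ x ∈ Q₁, lo ≤ idx x) → (∀ x ∈ Q₂, lo ≤ idx x) →
    Q₁ = (List.range' lo (d + 1)).map .inl ∧
      Q₂ = ((List.range' lo (d + 1)).reverse).map .inr := by
  intro d
  induction d with
  | zero =>
    intro lo Q₁ Q₂ _ hn₁ hh₁ hg₁ _ hn₂ hh₂ hg₂ _ _ _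
    constructor
    · rw [path_singleton hn₁ hh₁ (by simpa using hg₁)]; simp
    · rw [path_singleton hn₂ (by simpa using hh₂) hg₂]; simp
  | succ d ih =>
    intro lo Q₁ Q₂ hc₁ hn₁ hh₁ hg₁ hc₂ hn₂ hh₂ hg₂ hd hb₁ hb₂
    -- basic memberships
    have hblo : (Sum.inr lo : ℕ ⊕ ℕ) ∈ Q₂ := mem_of_getLast? hg₂
    have halo : (Sum.inl lo : ℕ ⊕ ℕ) ∈ Q₁ := mem_of_head? hh₁
    -- Q₁ = inl lo :: t₁
    obtain ⟨t₁, rfl⟩ : ∃ t, Q₁ = Sum.inl lo :: t := by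
      cases Q₁ with
      | nil => simp at hh₁
      | cons x t => simp at hh₁; subst hh₁; exact ⟨t, rfl⟩
    have ht₁ : t₁ ≠ [] := by
      rintro rfl
      simp [List.getLast?] at hg₁
    -- Q₂ = q₂ ++ [inr lo]
    have hQ₂ne : Q₂ ≠ [] := by rintro rfl; simp at hh₂
    have hlast₂ : Q₂.getLast hQ₂ne = Sum.inr lo := by
      rw [List.getLast?_eq_getLast hQ₂ne] at hg₂; simpa using hg₂
    have hsplit : Q₂.dropLast ++ [Sum.inr lo] = Q₂ := by
      conv_rhs => rw [← List.dropLast_append_getLast hQ₂ne]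
      rw [hlast₂]
    set q₂ := Q₂.dropLast with hq₂def
    have hq₂ne : q₂ ≠ [] := by
      rintro h
      rw [h, List.nil_append] at hsplit
      rw [← hsplit] at hh₂
      simp at hh₂
    -- second vertex of Q₁ is inl (lo+1)
    have hhead₁ : t₁.head? = some (Sum.inl (lo + 1)) := by
      have hE : NE (Sum.inl lo) (t₁.head ht₁) := by
        rw [List.Chain', List.isChain_cons] at hc₁
        exact hc₁.1 _ (List.head?_eq_head ht₁)
      have hmem : t₁.head ht₁ ∈ Sum.inl lo :: t₁ := by
        exact List.mem_cons_of_mem _ (List.head_mem ht₁)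
      have hne : t₁.head ht₁ ≠ Sum.inr lo := by
        intro h
        exact hd _ hmem (h ▸ hblo)
      have hle : lo ≤ idx (t₁.head ht₁) := hb₁ _ hmem
      rw [List.head?_eq_head ht₁]
      congr 1
      cases h : t₁.head ht₁ with
      | inl y =>
        rw [h] at hE hle
        simp only [NE] at hE
        simp only [idx, Sum.elim_inl, id] at hle
        have : y = lo + 1 := by omega
        rw [this]
      | inr y =>
        exfalso
        rw [h] at hE hne
        simp only [NE] at hE
        exact hne (by rw [hE])
    -- second-to-last vertex of Q₂ is inr (lo+1)
    have hchain_split : List.Chain' NE (q₂ ++ [Sum.inr lo]) := hsplit ▸ hc₂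
    rw [List.Chain', List.isChain_append] at hchain_split
    obtain ⟨hcq₂, -, hlink⟩ := hchain_split
    have hlast_q₂ : q₂.getLast? = some (Sum.inr (lo + 1)) := by
      have hE : NE (q₂.getLast hq₂ne) (Sum.inr lo) := by
        apply hlink _ (List.getLast?_eq_getLast hq₂ne) _ rfl
      have hmem : q₂.getLast hq₂ne ∈ Q₂ := by
        rw [← hsplit]
        exact List.mem_append_left _ (List.getLast_mem hq₂ne)
      have hne : q₂.getLast hq₂ne ≠ Sum.inl lo := by
        intro h
        exact hd _ halo (h ▸ hmem)
      have hle : lo ≤ idx (q₂.getLast hq₂ne) := hb₂ _ hmem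
      rw [List.getLast?_eq_getLast hq₂ne]
      congr 1
      cases h : q₂.getLast hq₂ne with
      | inl y =>
        exfalso
        rw [h] at hE hne
        simp only [NE] at hE
        exact hne (by rw [hE])
      | inr y =>
        rw [h] at hE hle
        simp only [NE] at hE
        simp only [idx, Sum.elim_inr, id] at hle
        have : y = lo + 1 := by omega
        rw [this]
    -- memberships for bound upgrades
    have hmem_t₁ : ∀ x ∈ t₁, lo + 1 ≤ idx x := by
      intro x hx
      have hx' : x ∈ Sum.inl lo :: t₁ := List.mem_cons_of_mem _ hx
      have : lo ≤ idx x := hb₁ _ hx'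
      rcases Nat.eq_or_lt_of_le this with h | h
      · exfalso
        cases x with
        | inl y =>
          have hy : y = lo := by simpa [idx] using h.symm
          rw [hy] at hx
          rw [List.nodup_cons] at hn₁
          exact hn₁.1 hx
        | inr y =>
          have hy : y = lo := by simpa [idx] using h.symm
          rw [hy] at hx'
          exact hd _ hx' hblo
      · omega
    have hmem_q₂ : ∀ x ∈ q₂, lo + 1 ≤ idx x := by
      intro x hx
      have hx' : x ∈ Q₂ := by rw [← hsplit]; exact List.mem_append_left _ hx
      have : lo ≤ idx x := hb₂ _ hx'
      rcases Nat.eq_or_lt_of_le this with h | h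
      · exfalso
        cases x with
        | inl y =>
          have hy : y = lo := by simpa [idx] using h.symm
          rw [hy] at hx'
          exact hd _ halo hx'
        | inr y =>
          have hy : y = lo := by simpa [idx] using h.symm
          rw [hy] at hx
          have hnd : (q₂ ++ [Sum.inr lo]).Nodup := hsplit ▸ hn₂
          rw [List.nodup_append] at hnd
          exact hnd.2.2 _ hx _ (by simp) rfl
      · omega
    -- apply IH
    have harith : lo + (d + 1) = (lo + 1) + d := by omega
    have hgt₁ : t₁.getLast? = some (Sum.inl ((lo + 1) + d)) := by
      have heq : (Sum.inl lo :: t₁).getLast? = t₁.getLast? := by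
        cases t₁ with
        | nil => exact absurd rfl ht₁
        | cons y s => rw [List.getLast?_cons_cons]
      rw [heq, harith] at hg₁
      exact hg₁
    have hhq₂ : q₂.head? = some (Sum.inr ((lo + 1) + d)) := by
      have heq : Q₂.head? = q₂.head? := by
        rw [← hsplit]
        cases hq : q₂ with
        | nil => exact absurd hq hq₂ne
        | cons y s => simp [hq]
      rw [heq, harith] at hh₂
      exact hh₂
    have hnq₂ : q₂.Nodup := List.Nodup.sublist (List.dropLast_sublist _) hn₂
    have hdisj : ∀ x ∈ t₁, x ∉ q₂ := by
      intro x hx hx'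
      exact hd _ (List.mem_cons_of_mem _ hx)
        (by rw [← hsplit]; exact List.mem_append_left _ hx')
    obtain ⟨e₁, e₂⟩ := ih (lo + 1) t₁ q₂ ((List.isChain_cons.mp hc₁).2)
      (List.Nodup.of_cons hn₁) hhead₁ hgt₁ hcq₂ hnq₂ hhq₂ hlast_q₂ hdisj hmem_t₁ hmem_q₂
    constructor
    · rw [List.range'_succ, List.map_cons, e₁]
    · rw [← hsplit, e₂]
      simp [List.range'_succ]

end Stmt17Aux

namespace Stmt17Aux

lemma tnE_iff (n : ℕ) (u v : Fin n ⊕ Fin n) :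
    TnE n u v ↔ NE (Sum.map Fin.val Fin.val u) (Sum.map Fin.val Fin.val v) := by
  cases u <;> cases v <;> simp [TnE, NE, Fin.ext_iff]

lemma finRange_getLast? (n : ℕ) :
    (List.finRange (n + 1)).getLast? = some (Fin.last n) := by
  rw [List.finRange_succ_last, List.getLast?_concat]

end Stmt17Aux

open Stmt17Aux in
/-- In `T_{n+1}` there is exactly one pair of vertex-disjoint paths
`(P₁, P₂)` with `P₁` from `a_1` to `a_n` and `P₂` from `b_n` to `b_1`, namely
`P₁ = (a_1, …, a_n)` and `P₂ = (b_n, …, b_1)`; together they use every vertex. -/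
theorem stmt_17 (n : ℕ) :
    (IsPathFrom (TnE (n + 1)) (Sum.inl 0) (Sum.inl (Fin.last n))
        ((List.finRange (n + 1)).map Sum.inl) ∧
      IsPathFrom (TnE (n + 1)) (Sum.inr (Fin.last n)) (Sum.inr 0)
        ((List.finRange (n + 1)).reverse.map Sum.inr) ∧
      (∀ x ∈ (List.finRange (n + 1)).map (Sum.inl : Fin (n+1) → Fin (n+1) ⊕ Fin (n+1)),
        x ∉ (List.finRange (n + 1)).reverse.map Sum.inr) ∧
      (∀ v : Fin (n + 1) ⊕ Fin (n + 1),
        v ∈ (List.finRange (n + 1)).map Sum.inl ∨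
        v ∈ (List.finRange (n + 1)).reverse.map Sum.inr)) ∧
    ∀ Q₁ Q₂ : List (Fin (n + 1) ⊕ Fin (n + 1)),
      IsPathFrom (TnE (n + 1)) (Sum.inl 0) (Sum.inl (Fin.last n)) Q₁ →
      IsPathFrom (TnE (n + 1)) (Sum.inr (Fin.last n)) (Sum.inr 0) Q₂ →
      (∀ x ∈ Q₁, x ∉ Q₂) →
      Q₁ = (List.finRange (n + 1)).map Sum.inl ∧
      Q₂ = (List.finRange (n + 1)).reverse.map Sum.inr := by
  constructor
  · refine ⟨⟨?_, ?_, ?_, ?_⟩, ⟨?_, ?_, ?_, ?_⟩, ?_, ?_⟩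
    · -- chain' of a-path
      rw [List.Chain', List.isChain_map, List.isChain_iff_getElem]
      intro i h
      simp only [List.getElem_finRange]
      exact Or.inl rfl
    · exact List.Nodup.map Sum.inl_injective (List.nodup_finRange _)
    · rw [List.head?_map]
      simp [List.finRange_succ]
    · rw [List.getLast?_map, finRange_getLast?]
      rfl
    · -- chain' of b-path
      rw [List.map_reverse, List.Chain', List.isChain_reverse, List.isChain_map, List.isChain_iff_getElem]
      intro i h
      simp only [List.getElem_finRange]
      exact Or.inl rfl
    · exact List.Nodup.map Sum.inr_injective (List.nodup_reverse.mpr (List.nodup_finRange _))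
    · rw [List.head?_map, List.head?_reverse, finRange_getLast?]
      rfl
    · rw [List.getLast?_map, List.getLast?_reverse]
      simp [List.finRange_succ]
    · intro x hx hx'
      rw [List.mem_map] at hx hx'
      obtain ⟨a, -, rfl⟩ := hx
      obtain ⟨b, -, hb⟩ := hx'
      simp at hb
    · intro v
      cases v with
      | inl x => left; simp
      | inr x => right; simp
  · intro Q₁ Q₂ h₁ h₂ hd
    obtain ⟨hc₁, hn₁, hh₁, hg₁⟩ := h₁
    obtain ⟨hc₂, hn₂, hh₂, hg₂⟩ := h₂
    set f : Fin (n + 1) ⊕ Fin (n + 1) → ℕ ⊕ ℕ := Sum.map Fin.val Fin.val with hf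
    have finj : Function.Injective f := Fin.val_injective.sumMap Fin.val_injective
    have hc₁' : (Q₁.map f).Chain' NE :=
      (List.isChain_map f).mpr (hc₁.imp (fun a b hab => (tnE_iff _ a b).mp hab))
    have hc₂' : (Q₂.map f).Chain' NE :=
      (List.isChain_map f).mpr (hc₂.imp (fun a b hab => (tnE_iff _ a b).mp hab))
    have hn₁' : (Q₁.map f).Nodup := List.Nodup.map finj hn₁
    have hn₂' : (Q₂.map f).Nodup := List.Nodup.map finj hn₂
    have hh₁' : (Q₁.map f).head? = some (Sum.inl 0) := by
      rw [List.head?_map, hh₁]; rfl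
    have hg₁' : (Q₁.map f).getLast? = some (Sum.inl (0 + n)) := by
      rw [List.getLast?_map, hg₁]; simp [hf]
    have hh₂' : (Q₂.map f).head? = some (Sum.inr (0 + n)) := by
      rw [List.head?_map, hh₂]; simp [hf]
    have hg₂' : (Q₂.map f).getLast? = some (Sum.inr 0) := by
      rw [List.getLast?_map, hg₂]; rfl
    have hd' : ∀ x ∈ Q₁.map f, x ∉ Q₂.map f := by
      intro x hx hx'
      rw [List.mem_map] at hx hx'
      obtain ⟨a, ha, rfl⟩ := hx
      obtain ⟨b, hb, hab⟩ := hx'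
      cases finj hab
      exact hd _ ha hb
    obtain ⟨e₁, e₂⟩ := Stmt17Aux.aux n 0 (Q₁.map f) (Q₂.map f) hc₁' hn₁' hh₁' hg₁'
      hc₂' hn₂' hh₂' hg₂' hd' (fun x _ => Nat.zero_le _) (fun x _ => Nat.zero_le _)
    have hcan₁ : ((List.finRange (n + 1)).map Sum.inl).map f
        = (List.range' 0 (n + 1)).map Sum.inl := by
      rw [List.map_map, show (f ∘ Sum.inl) = (Sum.inl ∘ Fin.val) from rfl, ← List.map_map,
        List.map_coe_finRange_eq_range, List.range_eq_range']
    have hcan₂ : ((List.finRange (n + 1)).reverse.map Sum.inr).map f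
        = ((List.range' 0 (n + 1)).reverse).map Sum.inr := by
      rw [List.map_map, show (f ∘ Sum.inr) = (Sum.inr ∘ Fin.val) from rfl, ← List.map_map,
        List.map_reverse, List.map_coe_finRange_eq_range, List.range_eq_range']
    constructor
    · apply List.map_injective_iff.mpr finj
      rw [e₁, hcan₁]
    · apply List.map_injective_iff.mpr finj
      rw [e₂, hcan₂]
end
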